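/- arXiv:2007.15141 — 8 statements merged into one kernel-verified Lean document; each statement's English description precedes it below -/
import Mathlib

section
/- The set of eight edges of Q_4 given by {(v,0,0,0), (0,v,1,0), (0,0,v,1), (0,1,0,v), (v,1,1,1), (1,v,0,1), (1,1,v,0), (1,0,1,v)} is a matching, and every 2-dimensional subcube of Q_4 contains exactly one of these edges. (Here (v,0,0,0) denotes the edge between (0,0,0,0) and (1,0,0,0), etc.) -/
def QAdj {n : ℕ} (x y : Fin n → Bool) : Prop :=
  (Finset.univ.filter (fun i => x i ≠ y i)).card = 1

def QEdge (n : ℕ) (e : Set (Fin n → Bool)) : Prop :=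
  ∃ x y, QAdj x y ∧ e = {x, y}

def IsSubcube (n k : ℕ) (S : Set (Fin n → Bool)) : Prop :=
  ∃ (F : Finset (Fin n)) (b : Fin n → Bool),
    F.card = n - k ∧ S = {x | ∀ i ∈ F, x i = b i}

def IsMatching (n : ℕ) (M : Set (Set (Fin n → Bool))) : Prop :=
  (∀ e ∈ M, QEdge n e) ∧ ∀ e ∈ M, ∀ f ∈ M, e ≠ f → e ∩ f = ∅

def Blocks (n k : ℕ) (M : Set (Set (Fin n → Bool))) : Prop :=
  ∀ S, IsSubcube n k S → ∃ e ∈ M, e ⊆ S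

def parity {n : ℕ} (x : Fin n → Bool) : ℕ :=
  (Finset.univ.filter (fun i => x i = true)).card % 2

def PS42 : Set (Set (Fin 4 → Bool)) :=
  { {![false,false,false,false], ![true,false,false,false]},
    {![false,false,true,false], ![false,true,true,false]},
    {![false,false,false,true], ![false,false,true,true]},
    {![false,true,false,false], ![false,true,false,true]},
    {![false,true,true,true], ![true,true,true,true]},
    {![true,false,false,true], ![true,true,false,true]},
    {![true,true,false,false], ![true,true,true,false]},
    {![true,false,true,false], ![true,false,true,true]} }

def E42 : Fin 8 → (Fin 4 → Bool) × (Fin 4 → Bool) :=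
  ![(![false,false,false,false], ![true,false,false,false]),
    (![false,false,true,false], ![false,true,true,false]),
    (![false,false,false,true], ![false,false,true,true]),
    (![false,true,false,false], ![false,true,false,true]),
    (![false,true,true,true], ![true,true,true,true]),
    (![true,false,false,true], ![true,true,false,true]),
    (![true,true,false,false], ![true,true,true,false]),
    (![true,false,true,false], ![true,false,true,true])]

def pairSet (j : Fin 8) : Set (Fin 4 → Bool) := {(E42 j).1, (E42 j).2}

lemma mem_PS42 {e : Set (Fin 4 → Bool)} : e ∈ PS42 ↔ ∃ j : Fin 8, e = pairSet j := by
  constructor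
  · intro h
    simp only [PS42, Set.mem_insert_iff, Set.mem_singleton_iff] at h
    rcases h with h|h|h|h|h|h|h|h
    exacts [⟨0, h⟩, ⟨1, h⟩, ⟨2, h⟩, ⟨3, h⟩, ⟨4, h⟩, ⟨5, h⟩, ⟨6, h⟩, ⟨7, h⟩]
  · rintro ⟨j, rfl⟩
    fin_cases j <;>
      · simp only [PS42, pairSet, Set.mem_insert_iff, Set.mem_singleton_iff]
        tauto

lemma adj42 : ∀ j : Fin 8, QAdj (E42 j).1 (E42 j).2 := by unfold QAdj; decide

lemma disj42 : ∀ j k : Fin 8, j ≠ k → ∀ x : Fin 4 → Bool,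
    ¬((x = (E42 j).1 ∨ x = (E42 j).2) ∧ (x = (E42 k).1 ∨ x = (E42 k).2)) := by decide

lemma block42 : ∀ F : Finset (Fin 4), ∀ b : Fin 4 → Bool, F.card = 2 →
    ∃ j : Fin 8, ((∀ i ∈ F, (E42 j).1 i = b i) ∧ (∀ i ∈ F, (E42 j).2 i = b i)) ∧
      ∀ k : Fin 8, ((∀ i ∈ F, (E42 k).1 i = b i) ∧ (∀ i ∈ F, (E42 k).2 i = b i)) → k = j := by
  decide

theorem stmt_3 :
    IsMatching 4 PS42 ∧
    ∀ S, IsSubcube 4 2 S → ∃! e, e ∈ PS42 ∧ e ⊆ S := by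
  constructor
  · constructor
    · intro e he
      obtain ⟨j, rfl⟩ := mem_PS42.mp he
      exact ⟨(E42 j).1, (E42 j).2, adj42 j, rfl⟩
    · intro e he f hf hne
      obtain ⟨j, rfl⟩ := mem_PS42.mp he
      obtain ⟨k, rfl⟩ := mem_PS42.mp hf
      have hjk : j ≠ k := by rintro rfl; exact hne rfl
      ext x
      simp only [Set.mem_inter_iff, Set.mem_empty_iff_false, iff_false, pairSet,
        Set.mem_insert_iff, Set.mem_singleton_iff]
      exact disj42 j k hjk x
  · rintro S ⟨F, b, hF, rfl⟩
    obtain ⟨j, ⟨h1, h2⟩, huniq⟩ := block42 F b hF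
    refine ⟨pairSet j, ⟨mem_PS42.mpr ⟨j, rfl⟩, ?_⟩, ?_⟩
    · rintro x (rfl | rfl)
      · exact h1
      · exact h2
    · rintro f ⟨hf, hsub⟩
      obtain ⟨k, rfl⟩ := mem_PS42.mp hf
      have hk : k = j := by
        apply huniq
        exact ⟨hsub (Or.inl rfl), hsub (Or.inr rfl)⟩
      rw [hk]
end

section
/- If there exists a matching M of Q_n such that every k-dimensional subcube of Q_n contains an edge of M, then there exists a matching M' of Q_{n+1} such that every (k+1)-dimensional subcube of Q_{n+1} contains an edge of M'. -/
lemma qadj_iff {n : ℕ} {x y : Fin n → Bool} :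
    QAdj x y ↔ ∃ j, x j ≠ y j ∧ ∀ i, i ≠ j → x i = y i := by
  unfold QAdj
  rw [Finset.card_eq_one]
  constructor
  · rintro ⟨j, hj⟩
    refine ⟨j, ?_, ?_⟩
    · have : j ∈ Finset.univ.filter (fun i => x i ≠ y i) := hj ▸ Finset.mem_singleton_self j
      simpa using this
    · intro i hi
      by_contra hc
      have : i ∈ Finset.univ.filter (fun i => x i ≠ y i) := by simpa using hc
      rw [hj, Finset.mem_singleton] at this
      exact hi this
  · rintro ⟨j, hj, hall⟩
    refine ⟨j, ?_⟩
    ext i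
    simp only [Finset.mem_filter, Finset.mem_univ, true_and, Finset.mem_singleton]
    constructor
    · intro hne; by_contra hij; exact hne (hall i hij)
    · rintro rfl; exact hj

lemma snoc_adj {n : ℕ} {x y : Fin n → Bool} (b : Bool) (h : QAdj x y) :
    QAdj (Fin.snoc x b) (Fin.snoc y b) := by
  rw [qadj_iff] at h ⊢
  obtain ⟨j, hj, hall⟩ := h
  refine ⟨j.castSucc, by simpa using hj, ?_⟩
  intro i
  refine Fin.lastCases ?_ ?_ i
  · intro _; simp
  · intro i' hi'
    have hne : i' ≠ j := fun hh => hi' (by rw [hh])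
    simp [Fin.snoc_castSucc, hall i' hne]

lemma snoc_inj {n : ℕ} (b : Bool) :
    Function.Injective (fun x : Fin n → Bool => (Fin.snoc x b : Fin (n+1) → Bool)) := by
  intro x y hxy
  funext i
  have := congrFun hxy i.castSucc
  simpa using this

lemma blocks_sub {n k : ℕ} {M : Set (Set (Fin n → Bool))} (hB : Blocks n k M)
    (F : Finset (Fin n)) (b : Fin n → Bool) (hF : F.card ≤ n - k) :
    ∃ e ∈ M, e ⊆ {x | ∀ i ∈ F, x i = b i} := by
  obtain ⟨G, hFG, -, hG⟩ := Finset.exists_subsuperset_card_eq (F.subset_univ) hF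
    (by simp [Nat.sub_le n k])
  obtain ⟨e, he, hsub⟩ := hB {x | ∀ i ∈ G, x i = b i} ⟨G, b, hG, rfl⟩
  exact ⟨e, he, hsub.trans (fun x hx i hi => hx i (hFG hi))⟩

theorem stmt_6 (n k : ℕ)
    (h : ∃ M, IsMatching n M ∧ Blocks n k M) :
    ∃ M', IsMatching (n + 1) M' ∧ Blocks (n + 1) (k + 1) M' := by
  obtain ⟨M, hM, hBk⟩ := h
  refine ⟨{s | ∃ e ∈ M, ∃ c : Bool, s = (fun w => Fin.snoc w c) '' e}, ⟨?_, ?_⟩, ?_⟩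
  · rintro s ⟨e, he, c, rfl⟩
    obtain ⟨x, y, hxy, rfl⟩ := hM.1 e he
    exact ⟨Fin.snoc x c, Fin.snoc y c, snoc_adj c hxy, by rw [Set.image_pair]⟩
  · rintro s ⟨e, he, c, rfl⟩ t ⟨f, hf, d, rfl⟩ hst
    by_cases hcd : c = d
    · subst hcd
      have hef : e ≠ f := fun hh => hst (by rw [hh])
      have hd := hM.2 e he f hf hef
      rw [← Set.image_inter (snoc_inj c), hd, Set.image_empty]
    · ext z
      simp only [Set.mem_inter_iff, Set.mem_image, Set.mem_empty_iff_false, iff_false]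
      rintro ⟨⟨u, -, hu⟩, ⟨v, -, hv⟩⟩
      apply hcd
      have h1 : z (Fin.last n) = c := by rw [← hu]; simp
      have h2 : z (Fin.last n) = d := by rw [← hv]; simp
      rw [← h1, h2]
  · rintro S ⟨F, b, hcard, rfl⟩
    rw [Nat.succ_sub_succ] at hcard
    set F' : Finset (Fin n) := Finset.univ.filter (fun i => i.castSucc ∈ F) with hF'def
    have hF' : F'.card ≤ n - k := by
      calc F'.card = (F'.image Fin.castSucc).card :=
            (Finset.card_image_of_injective _ (Fin.castSucc_injective n)).symm
        _ ≤ F.card := Finset.card_le_card (by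
            intro i hi
            simp only [Finset.mem_image] at hi
            obtain ⟨j, hj, rfl⟩ := hi
            simpa [hF'def] using hj)
        _ = n - k := hcard
    obtain ⟨e, he, hsub⟩ := blocks_sub hBk F' (fun i => b i.castSucc) hF'
    refine ⟨(fun w => Fin.snoc w (b (Fin.last n))) '' e, ⟨e, he, _, rfl⟩, ?_⟩
    rintro z ⟨w, hw, rfl⟩
    intro i
    refine Fin.lastCases ?_ ?_ i
    · intro _; simp
    · intro i' hi'
      have hmem : i' ∈ F' := by simp [hF'def, hi']
      have := hsub hw i' hmem
      simpa [Fin.snoc_castSucc] using this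
end

section
/- If there exists a matching M of Q_n such that every k-dimensional subcube of Q_n contains an edge of M, then there exists a matching M' of Q_{4n} such that every b-dimensional subcube of Q_{4n} contains an edge of M', where b = max(4k - 3, n + k). -/
/-- selector table -/
def fsel (p : Fin 4 → Bool) : Fin 4 :=
  match p 0, p 1, p 2, p 3 with
  | false, false, false, false => 0
  | false, false, false, true  => 1
  | false, false, true,  false => 3
  | false, false, true,  true  => 3
  | false, true,  false, false => 2
  | false, true,  false, true  => 1
  | false, true,  true,  false => 2
  | false, true,  true,  true  => 0
  | true,  false, false, false => 0
  | true,  false, false, true  => 2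
  | true,  false, true,  false => 1
  | true,  false, true,  true  => 2
  | true,  true,  false, false => 3
  | true,  true,  false, true  => 3
  | true,  true,  true,  false => 1
  | true,  true,  true,  true  => 0

lemma fsel_flip : ∀ (p : Fin 4 → Bool) (j : Fin 4) (c : Bool), fsel p = j →
    fsel (fun q => if q = j then c else p q) = j := by decide

lemma fselB : ∀ (j a b : Fin 4), a ≠ j → b ≠ j → a ≠ b → ∀ base : Fin 4 → Bool,
    ∃ s : Fin 4 → Bool, ∀ c : Bool,
      fsel (fun q => if q = j then c else if (q == a || q == b) = true then s q else base q) = j := by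
  decide

lemma fselA : ∀ (j a : Fin 4), a ≠ j → ∀ base : Fin 4 → Bool,
    (∃ s : Fin 4 → Bool, ∀ c : Bool,
      fsel (fun q => if q = j then c else if (q == a || q == a) = true then s q else base q) = j) ∨
    (∃ s : Fin 4 → Bool, ∀ c : Bool,
      fsel (fun q => if q = a then c else if (q == j || q == j) = true then s q else base q) = a) := by
  decide

/-- boolean parity -/
def parB {n : ℕ} (w : Fin n → Bool) : Bool := parity w == 1

lemma parB_adj {n : ℕ} {u v : Fin n → Bool} (h : QAdj u v) : parB v = !parB u := by
  classical
  set A := Finset.univ.filter (fun i => u i = true) with hA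
  set B := Finset.univ.filter (fun i => v i = true) with hB
  have hD : Finset.univ.filter (fun i => u i ≠ v i) = (A \ B) ∪ (B \ A) := by
    ext r
    simp only [hA, hB, Finset.mem_filter, Finset.mem_union, Finset.mem_sdiff, Finset.mem_univ,
      true_and]
    cases hu : u r <;> cases hv : v r <;> simp
  have hdisj : Disjoint (A \ B) (B \ A) := disjoint_sdiff_sdiff
  have hcard : (A \ B).card + (B \ A).card = 1 := by
    rw [← Finset.card_union_of_disjoint hdisj, ← hD]; exact h
  have h1 : (A \ B).card + (A ∩ B).card = A.card := Finset.card_sdiff_add_card_inter A B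
  have h2 : (B \ A).card + (B ∩ A).card = B.card := Finset.card_sdiff_add_card_inter B A
  have h3 : (A ∩ B).card = (B ∩ A).card := by rw [Finset.inter_comm]
  have hne : A.card % 2 ≠ B.card % 2 := by omega
  unfold parB parity
  rw [← hA, ← hB]
  rcases Nat.mod_two_eq_zero_or_one A.card with h4 | h4 <;>
    rcases Nat.mod_two_eq_zero_or_one B.card with h5 | h5 <;>
      simp_all

section Construction

variable {n : ℕ}

/-- block q of a vertex of Q_{4n} -/
def blk (x : Fin (4 * n) → Bool) (q : Fin 4) : Fin n → Bool :=
  fun r => x (finProdFinEquiv (q, r))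

/-- parity vector -/
def pv (x : Fin (4 * n) → Bool) : Fin 4 → Bool := fun q => parB (blk x q)

/-- block selector -/
def sig (x : Fin (4 * n) → Bool) : Fin 4 := fsel (pv x)

/-- the pairing relation defining M' -/
def PRel (M : Set (Set (Fin n → Bool))) (x y : Fin (4 * n) → Bool) : Prop :=
  (∀ i : Fin (4 * n), (finProdFinEquiv.symm i).1 ≠ sig x → x i = y i) ∧
  QAdj (blk x (sig x)) (blk y (sig x)) ∧
  ({blk x (sig x), blk y (sig x)} : Set (Fin n → Bool)) ∈ M

def Mbig (M : Set (Set (Fin n → Bool))) : Set (Set (Fin (4 * n) → Bool)) :=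
  {e | ∃ x y, PRel M x y ∧ e = {x, y}}

lemma QAdj_symm {m : ℕ} {u v : Fin m → Bool} (h : QAdj u v) : QAdj v u := by
  unfold QAdj at *
  rw [show (Finset.univ.filter (fun i => v i ≠ u i)) =
      (Finset.univ.filter (fun i => u i ≠ v i)) from by
    ext i; simp [ne_comm]]
  exact h

lemma QAdj_ne {m : ℕ} {u v : Fin m → Bool} (h : QAdj u v) : u ≠ v := by
  intro he
  subst he
  simp [QAdj] at h

lemma blk_eq_of_agree {M : Set (Set (Fin n → Bool))} {x y : Fin (4 * n) → Bool}
    (hR : PRel M x y) {q : Fin 4} (hq : q ≠ sig x) : blk y q = blk x q := by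
  funext r
  exact (hR.1 (finProdFinEquiv (q, r)) (by simp [Equiv.symm_apply_apply, hq])).symm

lemma PRel.sig_eq {M : Set (Set (Fin n → Bool))} {x y : Fin (4 * n) → Bool}
    (hR : PRel M x y) : sig y = sig x := by
  have hpv : pv y = fun q => if q = sig x then !(pv x (sig x)) else pv x q := by
    funext q
    by_cases hq : q = sig x
    · subst hq
      simp only [if_pos rfl]
      exact parB_adj hR.2.1
    · simp only [if_neg hq, pv]
      rw [blk_eq_of_agree hR hq]
  show fsel (pv y) = sig x
  rw [hpv]
  exact fsel_flip (pv x) (sig x) _ rfl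

lemma PRel.symm {M : Set (Set (Fin n → Bool))} {x y : Fin (4 * n) → Bool}
    (hR : PRel M x y) : PRel M y x := by
  have hs := hR.sig_eq
  refine ⟨?_, ?_, ?_⟩
  · intro i hi
    rw [hs] at hi
    exact (hR.1 i hi).symm
  · rw [hs]; exact QAdj_symm hR.2.1
  · rw [hs, Set.pair_comm]; exact hR.2.2

lemma PRel.qadj {M : Set (Set (Fin n → Bool))} {x y : Fin (4 * n) → Bool}
    (hR : PRel M x y) : QAdj x y := by
  classical
  obtain ⟨r0, hr0⟩ := Finset.card_eq_one.1 (hR.2.1 :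
    (Finset.univ.filter (fun r => blk x (sig x) r ≠ blk y (sig x) r)).card = 1)
  have key : Finset.univ.filter (fun i => x i ≠ y i) = {finProdFinEquiv (sig x, r0)} := by
    ext i
    simp only [Finset.mem_filter, Finset.mem_univ, true_and, Finset.mem_singleton]
    constructor
    · intro hxy
      have hq : (finProdFinEquiv.symm i).1 = sig x := by
        by_contra hq
        exact hxy (hR.1 i hq)
      obtain ⟨⟨q, r⟩, rfl⟩ : ∃ p, i = finProdFinEquiv p :=
        ⟨finProdFinEquiv.symm i, (finProdFinEquiv.apply_symm_apply i).symm⟩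
      rw [Equiv.symm_apply_apply] at hq
      subst hq
      have hmem : r ∈
          Finset.univ.filter (fun r => blk x (sig x) r ≠ blk y (sig x) r) := by
        simp only [Finset.mem_filter, Finset.mem_univ, true_and, blk]
        exact Finset.mem_filter.2 ⟨Finset.mem_univ _, hxy⟩
      rw [hr0, Finset.mem_singleton] at hmem
      rw [hmem]
    · intro hi
      subst hi
      have hr : r0 ∈ Finset.univ.filter (fun r => blk x (sig x) r ≠ blk y (sig x) r) := by
        rw [hr0]; exact Finset.mem_singleton_self r0
      simp only [Finset.mem_filter, Finset.mem_univ, true_and, blk] at hr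
      exact (Finset.mem_filter.1 hr).2
  unfold QAdj
  rw [key, Finset.card_singleton]

lemma pair_eq_of_PRel {M : Set (Set (Fin n → Bool))} (hM : IsMatching n M)
    {a b a' b' : Fin (4 * n) → Bool} (hab : PRel M a b) (ha'b' : PRel M a' b')
    (haa' : a = a') : ({a, b} : Set (Fin (4 * n) → Bool)) = {a', b'} := by
  subst haa'
  have heq : ({blk a (sig a), blk b (sig a)} : Set (Fin n → Bool)) =
      {blk a (sig a), blk b' (sig a)} := by
    by_contra heq
    have hdisj := hM.2 _ hab.2.2 _ ha'b'.2.2 heq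
    have : blk a (sig a) ∈ ({blk a (sig a), blk b (sig a)} : Set (Fin n → Bool)) ∩
        {blk a (sig a), blk b' (sig a)} := ⟨Set.mem_insert _ _, Set.mem_insert _ _⟩
    rw [hdisj] at this
    exact this.elim
  have hbb' : blk b (sig a) = blk b' (sig a) := by
    have h1 : blk b (sig a) ∈ ({blk a (sig a), blk b' (sig a)} : Set (Fin n → Bool)) := by
      rw [← heq]; exact Set.mem_insert_iff.2 (Or.inr rfl)
    rcases h1 with h1 | h1
    · exact absurd h1.symm (QAdj_ne hab.2.1)
    · exact h1
  have : b = b' := by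
    funext i
    by_cases hq : (finProdFinEquiv.symm i).1 = sig a
    · obtain ⟨⟨q, r⟩, rfl⟩ : ∃ p, i = finProdFinEquiv p :=
        ⟨finProdFinEquiv.symm i, (finProdFinEquiv.apply_symm_apply i).symm⟩
      rw [Equiv.symm_apply_apply] at hq
      subst hq
      exact congrFun hbb' r
    · rw [← hab.1 i hq, ha'b'.1 i hq]
  rw [this]

lemma Mbig_isMatching {M : Set (Set (Fin n → Bool))} (hM : IsMatching n M) :
    IsMatching (4 * n) (Mbig M) := by
  constructor
  · rintro e ⟨x, y, hR, rfl⟩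
    exact ⟨x, y, hR.qadj, rfl⟩
  · rintro e ⟨x, y, hR, rfl⟩ f ⟨x', y', hR', rfl⟩ hne
    by_contra hcap
    obtain ⟨z, hz1, hz2⟩ := Set.nonempty_iff_ne_empty.2 hcap
    apply hne
    have h1 : z = x ∨ z = y := hz1
    have h2 : z = x' ∨ z = y' := hz2
    rcases h1 with h1 | h1 <;> rcases h2 with h2 | h2
    · exact pair_eq_of_PRel hM hR hR' (h1.symm.trans h2)
    · exact (pair_eq_of_PRel hM hR hR'.symm (h1.symm.trans h2)).trans (Set.pair_comm y' x')
    · exact (Set.pair_comm x y).trans (pair_eq_of_PRel hM hR.symm hR' (h1.symm.trans h2))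
    · exact (Set.pair_comm x y).trans
        ((pair_eq_of_PRel hM hR.symm hR'.symm (h1.symm.trans h2)).trans (Set.pair_comm y' x'))

end Construction

lemma key {n k : ℕ} {M : Set (Set (Fin n → Bool))} (hM : IsMatching n M) (hB : Blocks n k M)
    (hn : 1 ≤ n)
    (F : Finset (Fin (4 * n))) (bv : Fin (4 * n) → Bool)
    (j : Fin 4) (adj : Fin 4 → Bool)
    (hadj : ∀ q : Fin 4, adj q = true →
      ((F.map finProdFinEquiv.symm.toEmbedding).filter (fun p => p.1 = q)).card < n)
    (hj : ((F.map finProdFinEquiv.symm.toEmbedding).filter (fun p => p.1 = j)).card ≤ n - k)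
    (hf : ∃ s : Fin 4 → Bool, ∀ c : Bool,
      fsel (fun q => if q = j then c else if adj q = true then s q else
        parB (fun r => bv (finProdFinEquiv (q, r)))) = j) :
    ∃ e ∈ Mbig M, e ⊆ {x : Fin (4 * n) → Bool | ∀ i ∈ F, x i = bv i} := by
  classical
  set G := F.map finProdFinEquiv.symm.toEmbedding with hG
  set Hq : Fin 4 → Finset (Fin n) := fun q => (G.filter (fun p => p.1 = q)).image Prod.snd
    with hHq
  have hHle : ∀ q, (Hq q).card ≤ (G.filter (fun p => p.1 = q)).card :=
    fun q => Finset.card_image_le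
  have hHj : (Hq j).card ≤ n - k := le_trans (hHle j) hj
  obtain ⟨H, hHsub, -, hHcard⟩ := Finset.exists_subsuperset_card_eq
    (Finset.subset_univ (Hq j)) hHj (by simp [Nat.sub_le n k])
  obtain ⟨e', he'M, he'sub⟩ := hB {w : Fin n → Bool | ∀ r ∈ H, w r = bv (finProdFinEquiv (j, r))}
    ⟨H, fun r => bv (finProdFinEquiv (j, r)), hHcard, rfl⟩
  obtain ⟨u, v, huv, rfl⟩ := hM.1 e' he'M
  have hu : ∀ r ∈ H, u r = bv (finProdFinEquiv (j, r)) := he'sub (Set.mem_insert _ _)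
  have hv : ∀ r ∈ H, v r = bv (finProdFinEquiv (j, r)) :=
    he'sub (Set.mem_insert_iff.2 (Or.inr rfl))
  -- choose a free coordinate in each adjustable block
  have hfree : ∀ q : Fin 4, ∃ r : Fin n, adj q = true → r ∉ Hq q := by
    intro q
    by_cases hq : adj q = true
    · have hlt : (Hq q).card < n := lt_of_le_of_lt (hHle q) (hadj q hq)
      have hne : ((Hq q)ᶜ : Finset (Fin n)).Nonempty := by
        rw [← Finset.card_pos, Finset.card_compl]
        simp only [Fintype.card_fin]
        omega
      obtain ⟨r, hr⟩ := hne
      exact ⟨r, fun _ => Finset.mem_compl.1 hr⟩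
    · exact ⟨⟨0, hn⟩, fun h => absurd h hq⟩
  choose rf hrf using hfree
  obtain ⟨s, hs⟩ := hf
  set t : Fin 4 → Bool := fun q =>
    if s q = parB (fun r => bv (finProdFinEquiv (q, r))) then bv (finProdFinEquiv (q, rf q))
    else !bv (finProdFinEquiv (q, rf q)) with ht
  set x : Fin (4 * n) → Bool := fun i =>
    if (finProdFinEquiv.symm i).1 = j then u (finProdFinEquiv.symm i).2
    else if adj (finProdFinEquiv.symm i).1 = true ∧
        (finProdFinEquiv.symm i).2 = rf (finProdFinEquiv.symm i).1 then
      t (finProdFinEquiv.symm i).1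
    else bv i with hx
  set y : Fin (4 * n) → Bool := fun i =>
    if (finProdFinEquiv.symm i).1 = j then v (finProdFinEquiv.symm i).2 else x i with hy
  have hblkxj : blk x j = u := by
    funext r
    show x (finProdFinEquiv (j, r)) = u r
    simp only [hx, Equiv.symm_apply_apply]
    simp
  have hblkyj : blk y j = v := by
    funext r
    show y (finProdFinEquiv (j, r)) = v r
    simp only [hy, Equiv.symm_apply_apply]
    simp
  have hblkx_ne : ∀ q, q ≠ j → blk x q =
      fun r => if adj q = true ∧ r = rf q then t q else bv (finProdFinEquiv (q, r)) := by
    intro q hq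
    funext r
    show x (finProdFinEquiv (q, r)) = _
    simp only [hx, Equiv.symm_apply_apply]
    simp [hq]
  have hpvx : pv x = fun q => if q = j then parB u
      else if adj q = true then s q else parB (fun r => bv (finProdFinEquiv (q, r))) := by
    funext q
    show parB (blk x q) = _
    by_cases hq : q = j
    · subst hq
      rw [hblkxj, if_pos rfl]
    · rw [hblkx_ne q hq, if_neg hq]
      by_cases ha : adj q = true
      · rw [if_pos ha]
        by_cases hts : s q = parB (fun r => bv (finProdFinEquiv (q, r)))
        · have heqf : (fun r => if adj q = true ∧ r = rf q then t q
              else bv (finProdFinEquiv (q, r))) = fun r => bv (finProdFinEquiv (q, r)) := by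
            funext r
            by_cases hr : r = rf q
            · subst hr
              rw [if_pos ⟨ha, rfl⟩]
              show (if s q = parB (fun r => bv (finProdFinEquiv (q, r))) then
                bv (finProdFinEquiv (q, rf q)) else !bv (finProdFinEquiv (q, rf q))) = _
              rw [if_pos hts]
            · rw [if_neg (fun hcc => hr hcc.2)]
          rw [heqf]
          exact hts.symm
        · have htq : t q = !bv (finProdFinEquiv (q, rf q)) := by
            show (if s q = parB (fun r => bv (finProdFinEquiv (q, r))) then
              bv (finProdFinEquiv (q, rf q)) else !bv (finProdFinEquiv (q, rf q))) = _
            rw [if_neg hts]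
          have hQ : QAdj (fun r => bv (finProdFinEquiv (q, r)))
              (fun r => if adj q = true ∧ r = rf q then t q
                else bv (finProdFinEquiv (q, r))) := by
            unfold QAdj
            have hfe : Finset.univ.filter (fun r => bv (finProdFinEquiv (q, r)) ≠
                (if adj q = true ∧ r = rf q then t q else bv (finProdFinEquiv (q, r)))) =
                {rf q} := by
              ext r
              simp only [Finset.mem_filter, Finset.mem_univ, true_and, Finset.mem_singleton]
              constructor
              · intro hne
                by_contra hr
                rw [if_neg (fun hcc => hr hcc.2)] at hne
                exact hne rfl
              · intro hr
                subst hr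
                rw [if_pos ⟨ha, rfl⟩, htq]
                simp
            rw [hfe, Finset.card_singleton]
          rw [parB_adj hQ]
          cases hsq : s q <;>
            cases hbq2 : parB (fun r => bv (finProdFinEquiv (q, r))) <;> simp_all
      · rw [if_neg ha]
        have heqf : (fun r => if adj q = true ∧ r = rf q then t q
            else bv (finProdFinEquiv (q, r))) = fun r => bv (finProdFinEquiv (q, r)) := by
          funext r
          rw [if_neg (fun hcc => ha hcc.1)]
        rw [heqf]
  have hsigx : sig x = j := by
    show fsel (pv x) = j
    rw [hpvx]
    exact hs (parB u)
  have hRel : PRel M x y := by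
    refine ⟨?_, ?_, ?_⟩
    · intro i hi
      rw [hsigx] at hi
      simp only [hy]
      rw [if_neg hi]
    · rw [hsigx, hblkxj, hblkyj]; exact huv
    · rw [hsigx, hblkxj, hblkyj]; exact he'M
  have hmemH : ∀ (q : Fin 4) (r : Fin n), finProdFinEquiv (q, r) ∈ F → r ∈ Hq q := by
    intro q r hiF
    have hiG : (q, r) ∈ G := by
      rw [hG, Finset.mem_map_equiv]
      simpa using hiF
    exact Finset.mem_image.2 ⟨(q, r), Finset.mem_filter.2 ⟨hiG, rfl⟩, rfl⟩
  have hxS : ∀ i ∈ F, x i = bv i := by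
    intro i hiF
    obtain ⟨⟨q, r⟩, rfl⟩ : ∃ p, i = finProdFinEquiv p :=
      ⟨finProdFinEquiv.symm i, (finProdFinEquiv.apply_symm_apply i).symm⟩
    have hrH := hmemH q r hiF
    by_cases hq : q = j
    · subst hq
      have hur : u r = bv (finProdFinEquiv (q, r)) := hu r (hHsub hrH)
      simp only [hx, Equiv.symm_apply_apply]
      simpa using hur
    · by_cases hc : adj q = true ∧ r = rf q
      · exact absurd (hc.2 ▸ hrH) (hrf q hc.1)
      · simp only [hx, Equiv.symm_apply_apply]
        simp [hq, hc]
  have hyS : ∀ i ∈ F, y i = bv i := by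
    intro i hiF
    by_cases hq : (finProdFinEquiv.symm i).1 = j
    · obtain ⟨⟨q, r⟩, rfl⟩ : ∃ p, i = finProdFinEquiv p :=
        ⟨finProdFinEquiv.symm i, (finProdFinEquiv.apply_symm_apply i).symm⟩
      rw [Equiv.symm_apply_apply] at hq
      subst hq
      have hrH := hmemH q r hiF
      have hvr : v r = bv (finProdFinEquiv (q, r)) := hv r (hHsub hrH)
      simp only [hy, Equiv.symm_apply_apply]
      simpa using hvr
    · rw [show y i = x i from by simp only [hy]; rw [if_neg hq]]
      exact hxS i hiF
  refine ⟨{x, y}, ⟨x, y, hRel, rfl⟩, ?_⟩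
  intro z hz
  rcases hz with rfl | rfl
  · exact hxS
  · exact hyS

lemma others : ∀ j : Fin 4, ∃ a b c : Fin 4, a ≠ j ∧ b ≠ j ∧ c ≠ j ∧ a ≠ b ∧ a ≠ c ∧ b ≠ c ∧
    ∀ q : Fin 4, q = j ∨ q = a ∨ q = b ∨ q = c := by decide

set_option linter.all false in
set_option maxHeartbeats 1000000 in
theorem stmt_8 (n k : ℕ)
    (h : ∃ M, IsMatching n M ∧ Blocks n k M) :
    ∃ M', IsMatching (4 * n) M' ∧ Blocks (4 * n) (max (4 * k - 3) (n + k)) M' := by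
  classical
  obtain ⟨M, hM, hB⟩ := h
  have hk : 1 ≤ k := by
    by_contra hk0
    have hk0' : k = 0 := by omega
    subst hk0'
    obtain ⟨e, heM, hesub⟩ := hB {x | ∀ i ∈ (Finset.univ : Finset (Fin n)), x i = false}
      ⟨Finset.univ, fun _ => false, by simp, rfl⟩
    obtain ⟨x, y, hxy, rfl⟩ := hM.1 e heM
    have hx := hesub (Set.mem_insert _ _)
    have hy := hesub (Set.mem_insert_iff.2 (Or.inr rfl))
    apply QAdj_ne hxy
    funext i
    rw [hx i (Finset.mem_univ i), hy i (Finset.mem_univ i)]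
  have hn : 1 ≤ n := by
    by_contra hn0
    have hn0' : n = 0 := by omega
    subst hn0'
    obtain ⟨e, heM, -⟩ := hB Set.univ ⟨∅, fun _ => false, by simp, by ext x; simp⟩
    obtain ⟨x, y, hxy, -⟩ := hM.1 e heM
    unfold QAdj at hxy
    rw [Finset.eq_empty_of_isEmpty (Finset.univ : Finset (Fin 0))] at hxy
    simp at hxy
  refine ⟨Mbig M, Mbig_isMatching hM, ?_⟩
  intro S hS
  obtain ⟨F, bv, hFcard, rfl⟩ := hS
  set G := F.map finProdFinEquiv.symm.toEmbedding with hG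
  have hGcard : G.card = F.card := Finset.card_map _
  set g : Fin 4 → ℕ := fun q => (G.filter (fun p => p.1 = q)).card with hg
  have hsum : G.card = ∑ q : Fin 4, g q :=
    Finset.card_eq_sum_card_fiberwise (fun p _ => Finset.mem_univ p.1)
  have hsum4 : g 0 + g 1 + g 2 + g 3 = G.card := by
    rw [hsum, Fin.sum_univ_four]
  have hgle : ∀ q : Fin 4, g q ≤ n := by
    intro q
    have hle : (G.filter (fun p => p.1 = q)).card ≤ (Finset.univ : Finset (Fin n)).card := by
      apply Finset.card_le_card_of_injOn Prod.snd (fun p _ => Finset.mem_univ _)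
      intro p hp p' hp' hsnd
      have h1 := (Finset.mem_filter.1 hp).2
      have h2 := (Finset.mem_filter.1 hp').2
      exact Prod.ext (h1.trans h2.symm) hsnd
    simpa using hle
  have hj4 : g 0 ≤ n - k ∨ g 1 ≤ n - k ∨ g 2 ≤ n - k ∨ g 3 ≤ n - k := by
    have h0 := hgle 0
    have h1 := hgle 1
    have h2 := hgle 2
    have h3 := hgle 3
    omega
  obtain ⟨j, hj⟩ : ∃ j : Fin 4, g j ≤ n - k := by
    rcases hj4 with h | h | h | h
    exacts [⟨0, h⟩, ⟨1, h⟩, ⟨2, h⟩, ⟨3, h⟩]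
  obtain ⟨a, b, c, ha, hb, hc, hab, hac, hbc, hcov⟩ := others j
  have huniv : (Finset.univ : Finset (Fin 4)) = {j, a, b, c} := by
    ext q
    have := hcov q
    simp only [Finset.mem_univ, true_iff, Finset.mem_insert, Finset.mem_singleton]
    tauto
  have hsumj : g j + (g a + (g b + g c)) = G.card := by
    rw [hsum, huniv]
    rw [Finset.sum_insert (by simp [Ne.symm ha, Ne.symm hb, Ne.symm hc]),
      Finset.sum_insert (by simp [hab, hac]),
      Finset.sum_insert (by simp [hbc]), Finset.sum_singleton]
  have hla := hgle a
  have hlb := hgle b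
  have hlc := hgle c
  have hlj := hgle j
  have caseB : ∀ p q : Fin 4, p ≠ j → q ≠ j → p ≠ q → g p < n → g q < n →
      ∃ e ∈ Mbig M, e ⊆ {x : Fin (4 * n) → Bool | ∀ i ∈ F, x i = bv i} := by
    intro p q hpj hqj hpq hgp hgq
    apply key hM hB hn F bv j (fun w => w == p || w == q)
    · intro w hw
      simp only [Bool.or_eq_true, beq_iff_eq] at hw
      rcases hw with rfl | rfl
      · exact hgp
      · exact hgq
    · exact hj
    · exact fselB j p q hpj hqj hpq (fun q' => parB fun r => bv (finProdFinEquiv (q', r)))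
  have caseA : ∀ p : Fin 4, p ≠ j → g p ≤ n - k →
      ∃ e ∈ Mbig M, e ⊆ {x : Fin (4 * n) → Bool | ∀ i ∈ F, x i = bv i} := by
    intro p hpj hgp
    rcases fselA j p hpj (fun q' => parB fun r => bv (finProdFinEquiv (q', r))) with hf | hf
    · apply key hM hB hn F bv j (fun w => w == p || w == p)
      · intro w hw
        simp only [Bool.or_self, beq_iff_eq] at hw
        subst hw
        show g w < n
        omega
      · exact hj
      · exact hf
    · apply key hM hB hn F bv p (fun w => w == j || w == j)
      · intro w hw
        simp only [Bool.or_self, beq_iff_eq] at hw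
        subst hw
        show g w < n
        omega
      · exact hgp
      · exact hf
  have harith : g j + (g a + (g b + g c)) = 4 * n - max (4 * k - 3) (n + k) := by
    rw [hsumj, hGcard, hFcard]
  clear_value g
  clear hg hsum hsum4 hj4 hGcard hsumj huniv hcov
  rcases lt_or_ge (g a) n with hga | hga <;> rcases lt_or_ge (g b) n with hgb | hgb <;>
    rcases lt_or_ge (g c) n with hgc | hgc
  · exact caseB a b ha hb hab hga hgb
  · exact caseB a b ha hb hab hga hgb
  · exact caseB a c ha hc hac hga hgc
  · exact caseA a ha (by omega)
  · exact caseB b c hb hc hbc hgb hgc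
  · exact caseA b hb (by omega)
  · exact caseA c hc (by omega)
  · exfalso
    omega
end

section
/- If there exists a matching of Q_n with k = ⌊n/3⌋ + 1 such that every k-dimensional subcube of Q_n contains an edge of the matching, then there exists a matching of Q_{4n} such that every (⌊4n/3⌋ + 1)-dimensional subcube of Q_{4n} contains an edge of the matching. -/
namespace SAux
open Finset

def ftab : Bool → Bool → Bool → Bool → Fin 4
  | false, false, false, false => 0
  | true,  false, false, false => 0
  | false, true,  false, false => 2
  | true,  true,  false, false => 3
  | false, false, true,  false => 3
  | true,  false, true,  false => 1
  | false, true,  true,  false => 2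
  | true,  true,  true,  false => 1
  | false, false, false, true  => 1
  | true,  false, false, true  => 2
  | false, true,  false, true  => 1
  | true,  true,  false, true  => 3
  | false, false, true,  true  => 3
  | true,  false, true,  true  => 2
  | false, true,  true,  true  => 0
  | true,  true,  true,  true  => 0

def fsel (q : Fin 4 → Bool) : Fin 4 := ftab (q 0) (q 1) (q 2) (q 3)

lemma fsel_invar : ∀ (q q' : Fin 4 → Bool) (j : Fin 4), fsel q = j →
    (∀ i, i ≠ j → q' i = q i) → fsel q' = j := by decide

set_option maxHeartbeats 2000000 in
set_option synthInstance.maxSize 2000 in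
lemma fsel_main : ∀ (big free : Fin 4 → Bool) (p : Fin 4 → Bool),
    (∀ i, big i = true → free i = true) →
    (∃ i, big i = true) →
    (∀ a b : Fin 4, a ≠ b → free a = false → free b = false →
      ∃ c d : Fin 4, c ≠ d ∧ big c = true ∧ big d = true) →
    ∃ j q, big j = true ∧ fsel q = j ∧ ∀ i, i ≠ j → q i ≠ p i → free i = true := by
  decide

def E4 (n : ℕ) : Fin 4 × Fin n ≃ Fin (4 * n) := finProdFinEquiv

variable {n : ℕ}

def blk (i : Fin (4 * n)) : Fin 4 := ((E4 n).symm i).1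
def pos (i : Fin (4 * n)) : Fin n := ((E4 n).symm i).2
def idx (j : Fin 4) (t : Fin n) : Fin (4 * n) := E4 n (j, t)

lemma blk_idx (j : Fin 4) (t : Fin n) : blk (idx j t) = j := by
  simp [blk, idx]

lemma pos_idx (j : Fin 4) (t : Fin n) : pos (idx j t) = t := by
  simp [pos, idx]

lemma idx_blk_pos (i : Fin (4 * n)) : idx (blk i) (pos i) = i := by
  simp [blk, pos, idx]

lemma idx_inj (j : Fin 4) : Function.Injective (fun t : Fin n => idx j t) := by
  intro a b hab
  have := (E4 n).injective hab
  simpa [Prod.ext_iff] using this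

def emb (j : Fin 4) (u : Fin n → Bool) (c : Fin (4 * n) → Bool) : Fin (4 * n) → Bool :=
  fun i => if blk i = j then u (pos i) else c i

def bpar (v : Fin n → Bool) : Bool := decide ((univ.filter (fun t => v t = true)).card % 2 = 1)

def res (j : Fin 4) (x : Fin (4 * n) → Bool) : Fin n → Bool := fun t => x (idx j t)

def pvec (x : Fin (4 * n) → Bool) : Fin 4 → Bool := fun j => bpar (res j x)

lemma res_emb_self (j : Fin 4) (u : Fin n → Bool) (c : Fin (4 * n) → Bool) :
    res j (emb j u c) = u := by
  funext t; simp [res, emb, blk_idx, pos_idx]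

lemma res_emb_ne {i j : Fin 4} (h : i ≠ j) (u : Fin n → Bool) (c : Fin (4 * n) → Bool) :
    res i (emb j u c) = fun t => c (idx i t) := by
  funext t; simp [res, emb, blk_idx, h]

lemma bpar_flip (v : Fin n → Bool) (t0 : Fin n) (h : v t0 = false) :
    bpar (Function.update v t0 true) = !bpar v := by
  unfold bpar
  have hins : (univ.filter (fun t => Function.update v t0 true t = true))
      = insert t0 (univ.filter (fun t => v t = true)) := by
    ext t
    rcases eq_or_ne t t0 with rfl | hne
    · simp
    · simp [Function.update_of_ne hne, hne]
  rw [hins, Finset.card_insert_of_notMem (by simp [h])]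
  rcases Nat.mod_two_eq_zero_or_one ((univ.filter (fun t => v t = true)).card) with h2 | h2 <;>
    simp [Nat.add_mod, h2]

lemma adjust (w : Fin n → Bool) (P : Finset (Fin n)) (ht : ∃ t, t ∉ P) (β : Bool) :
    ∃ v : Fin n → Bool, (∀ t ∈ P, v t = w t) ∧ bpar v = β := by
  classical
  by_cases hb : bpar (fun t => if t ∈ P then w t else false) = β
  · exact ⟨_, fun t htP => by simp [htP], hb⟩
  · obtain ⟨t0, ht0⟩ := ht
    refine ⟨Function.update (fun t => if t ∈ P then w t else false) t0 true, ?_, ?_⟩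
    · intro t htP
      rw [Function.update_of_ne (by rintro rfl; exact ht0 htP)]
      simp [htP]
    · rw [bpar_flip _ t0 (by simp [ht0])]
      cases hβ : β <;> cases h0 : bpar (fun t => if t ∈ P then w t else false) <;> simp_all

lemma emb_adj {u v : Fin n → Bool} (j : Fin 4) (c : Fin (4 * n) → Bool)
    (h : QAdj u v) : QAdj (emb j u c) (emb j v c) := by
  unfold QAdj at *
  have himg : (univ.filter (fun i => emb j u c i ≠ emb j v c i))
      = (univ.filter (fun t => u t ≠ v t)).image (fun t => idx j t) := by
    ext i
    simp only [Finset.mem_filter, Finset.mem_image, Finset.mem_univ, true_and]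
    constructor
    · intro hi
      by_cases hb : blk i = j
      · refine ⟨pos i, ?_, by rw [← hb, idx_blk_pos]⟩
        simpa [emb, hb] using hi
      · exfalso; simp [emb, hb] at hi
    · rintro ⟨t, htuv, rfl⟩
      simpa [emb, blk_idx, pos_idx] using htuv
  rw [himg, Finset.card_image_of_injective _ (idx_inj j), h]

/-- The lifted matching. -/
def lift (M : Set (Set (Fin n → Bool))) : Set (Set (Fin (4 * n) → Bool)) :=
  { E | ∃ (j : Fin 4) (e : Set (Fin n → Bool)) (c : Fin (4 * n) → Bool),
      e ∈ M ∧ (∀ x ∈ E, fsel (pvec x) = j) ∧ E = (fun u => emb j u c) '' e }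

lemma lift_isMatching {M : Set (Set (Fin n → Bool))} (hM : IsMatching n M) :
    IsMatching (4 * n) (lift M) := by
  constructor
  · rintro E ⟨j, e, c, heM, -, rfl⟩
    obtain ⟨u, v, huv, rfl⟩ := hM.1 e heM
    exact ⟨emb j u c, emb j v c, emb_adj j c huv, by rw [Set.image_pair]⟩
  · rintro E1 hE1 E2 hE2 hne
    obtain ⟨j1, e1, c1, he1, hp1, rfl⟩ := hE1
    obtain ⟨j2, e2, c2, he2, hp2, rfl⟩ := hE2
    by_contra hcon
    obtain ⟨x, hx1, hx2⟩ := Set.nonempty_iff_ne_empty.2 hcon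
    have hj : j1 = j2 := by
      have h1 := hp1 x hx1
      have h2 := hp2 x hx2
      rw [h1] at h2; exact h2
    subst hj
    obtain ⟨u1, hu1, hxu1⟩ := hx1
    obtain ⟨u2, hu2, hxu2⟩ := hx2
    have hres1 : res j1 x = u1 := by rw [← hxu1, res_emb_self]
    have hres2 : res j1 x = u2 := by rw [← hxu2, res_emb_self]
    have he12 : e1 = e2 := by
      by_contra hne12
      have := hM.2 e1 he1 e2 he2 hne12
      have : res j1 x ∈ e1 ∩ e2 := ⟨hres1 ▸ hu1, hres2 ▸ hu2⟩
      simp_all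
    apply hne
    subst he12
    have hc : ∀ i, blk i ≠ j1 → c1 i = c2 i := by
      intro i hbi
      have h1 : x i = c1 i := by rw [← hxu1]; simp [emb, hbi]
      have h2 : x i = c2 i := by rw [← hxu2]; simp [emb, hbi]
      rw [← h1, h2]
    have hfun : (fun u => emb j1 u c1) = (fun u => emb j1 u c2) := by
      funext u i
      by_cases hb : blk i = j1 <;> simp [emb, hb, hc]
    rw [hfun]
lemma lift_blocks {M : Set (Set (Fin n → Bool))} (hn : 1 ≤ n)
    (hB : Blocks n (n / 3 + 1) M) :
    Blocks (4 * n) (4 * n / 3 + 1) (lift M) := by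
  classical
  rintro S ⟨F, bb, hFcard, rfl⟩
  set g : Fin 4 → ℕ := fun j => (univ.filter (fun t : Fin n => idx j t ∉ F)).card with hg
  have hfiber : ∀ j : Fin 4, (Fᶜ.filter (fun i => blk i = j))
      = (univ.filter (fun t : Fin n => idx j t ∉ F)).image (fun t => idx j t) := by
    intro j; ext i
    simp only [mem_filter, mem_compl, mem_image, mem_univ, true_and]
    constructor
    · rintro ⟨hiF, hbi⟩
      refine ⟨pos i, ?_, ?_⟩
      · rw [← hbi, idx_blk_pos]; exact hiF
      · rw [← hbi, idx_blk_pos]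
    · rintro ⟨t, htF, rfl⟩
      exact ⟨htF, blk_idx j t⟩
  have hsum : ∑ j : Fin 4, g j = Fᶜ.card := by
    rw [Finset.card_eq_sum_card_fiberwise (f := blk) (fun x _ => mem_univ (blk x))]
    refine (Finset.sum_congr rfl fun j _ => ?_).symm
    rw [hfiber j, Finset.card_image_of_injective _ (idx_inj j), hg]
  have hFccard : Fᶜ.card = 4 * n / 3 + 1 := by
    rw [Finset.card_compl, hFcard]
    simp only [Fintype.card_fin]
    omega
  have hgle : ∀ j, g j ≤ n := fun j => le_trans (card_filter_le _ _) (by simp)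
  have hsum4 : g 0 + g 1 + g 2 + g 3 = 4 * n / 3 + 1 := by
    have h := hsum
    rw [Fin.sum_univ_four, hFccard] at h
    exact h
  set big : Fin 4 → Bool := fun j => decide (n / 3 + 1 ≤ g j) with hbigdef
  set free : Fin 4 → Bool := fun j => decide (1 ≤ g j) with hfreedef
  have hbigiff : ∀ j, big j = true ↔ n / 3 + 1 ≤ g j := by intro j; simp [hbigdef]
  have hfreeiff : ∀ j, free j = true ↔ 1 ≤ g j := by intro j; simp [hfreedef]
  set p : Fin 4 → Bool :=
    fun i => bpar (fun t => if idx i t ∈ F then bb (idx i t) else false) with hpdef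
  have hsub : ∀ i, big i = true → free i = true := by
    intro i hi
    rw [hbigiff] at hi; rw [hfreeiff]; omega
  have hex : ∃ i, big i = true := by
    by_contra hno
    push_neg at hno
    have hno' : ∀ i, g i ≤ n / 3 := by
      intro i
      by_contra hgt
      exact absurd ((hbigiff i).2 (by omega)) (by simp [hno i])
    have h0 := hno' 0; have h1 := hno' 1; have h2 := hno' 2; have h3 := hno' 3
    omega
  have hcd : ∀ a b : Fin 4, a ≠ b → ∃ c d : Fin 4, c ≠ d ∧ a ≠ c ∧ a ≠ d ∧ b ≠ c ∧ b ≠ d ∧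
      ({a, b, c, d} : Finset (Fin 4)) = univ := by decide
  have h3 : ∀ a b : Fin 4, a ≠ b → free a = false → free b = false →
      ∃ c d : Fin 4, c ≠ d ∧ big c = true ∧ big d = true := by
    intro a b hab hfa hfb
    have hga : g a = 0 := by
      have := hfreeiff a; rw [hfa] at this; simp at this; omega
    have hgb : g b = 0 := by
      have := hfreeiff b; rw [hfb] at this; simp at this; omega
    obtain ⟨c, d, hcd', hac, had, hbc, hbd, hset⟩ := hcd a b hab
    have habcd : g a + g b + g c + g d = 4 * n / 3 + 1 := by
      have h := hsum
      rw [hFccard, ← hset] at h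
      rw [Finset.sum_insert (by simp [hab, hac, had]),
        Finset.sum_insert (by simp [hbc, hbd]),
        Finset.sum_pair hcd'] at h
      omega
    have hc : n / 3 + 1 ≤ g c := by have := hgle d; omega
    have hd : n / 3 + 1 ≤ g d := by have := hgle c; omega
    exact ⟨c, d, hcd', (hbigiff c).2 hc, (hbigiff d).2 hd⟩
  obtain ⟨j, q, hbigj, hfq, hqfree⟩ := fsel_main big free p hsub hex h3
  -- choose block vertex functions realizing required parities
  have hv : ∀ i : Fin 4, ∃ v : Fin n → Bool,
      (∀ t, idx i t ∈ F → v t = bb (idx i t)) ∧ (i ≠ j → bpar v = q i) := by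
    intro i
    by_cases hij : i = j
    · exact ⟨fun t => if idx i t ∈ F then bb (idx i t) else false,
        fun t ht => by simp [ht], fun h => absurd hij h⟩
    · by_cases hq : q i = p i
      · refine ⟨fun t => if idx i t ∈ F then bb (idx i t) else false,
          fun t ht => by simp [ht], fun _ => ?_⟩
        rw [hq, hpdef]
      · have hfi : free i = true := hqfree i hij hq
        have hgi : 1 ≤ g i := (hfreeiff i).1 hfi
        have hnt : ∃ t : Fin n, t ∉ (univ.filter (fun t => idx i t ∈ F)) := by
          obtain ⟨t, ht⟩ := Finset.card_pos.1
            (show 0 < (univ.filter (fun t : Fin n => idx i t ∉ F)).card from hgi)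
          simp only [mem_filter, mem_univ, true_and] at ht
          exact ⟨t, by simp [ht]⟩
        obtain ⟨v, hvfix, hvpar⟩ :=
          adjust (fun t => bb (idx i t)) (univ.filter (fun t => idx i t ∈ F)) hnt (q i)
        exact ⟨v, fun t ht => hvfix t (by simp [ht]), fun _ => hvpar⟩
  choose v hvfix hvpar using hv
  set c : Fin (4 * n) → Bool := fun i' => v (blk i') (pos i') with hcdef
  -- the subcube inside block j
  have hgjbig : n / 3 + 1 ≤ g j := (hbigiff j).1 hbigj
  have hFj : (univ.filter (fun t : Fin n => idx j t ∈ F)).card + g j = n := by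
    rw [hg]
    have := Finset.card_filter_add_card_filter_not
      (s := (univ : Finset (Fin n))) (p := fun t : Fin n => idx j t ∈ F)
    simpa using this
  obtain ⟨F', hF'sub, hF'univ, hF'card⟩ :=
    Finset.exists_subsuperset_card_eq
      (Finset.subset_univ (univ.filter (fun t : Fin n => idx j t ∈ F)))
      (show (univ.filter (fun t : Fin n => idx j t ∈ F)).card ≤ n - (n / 3 + 1) by omega)
      (by simp)
  obtain ⟨e, heM, heS⟩ := hB {u | ∀ t ∈ F', u t =
      (fun t => if idx j t ∈ F then bb (idx j t) else false) t}
    ⟨F', (fun t => if idx j t ∈ F then bb (idx j t) else false), hF'card, rfl⟩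
  have heFix : ∀ u ∈ e, ∀ t : Fin n, idx j t ∈ F → u t = bb (idx j t) := by
    intro u hu t ht
    have htF' : t ∈ F' := hF'sub (by simp [ht])
    have := heS hu t htF'
    simpa [ht] using this
  refine ⟨(fun u => emb j u c) '' e, ⟨j, e, c, heM, ?_, rfl⟩, ?_⟩
  · rintro x ⟨u, hu, rfl⟩
    apply fsel_invar q _ j hfq
    intro i hij
    have hres : res i (emb j u c) = v i := by
      rw [res_emb_ne hij]
      funext t
      rw [hcdef]
      simp [blk_idx, pos_idx]
    show bpar (res i (emb j u c)) = q i
    rw [hres]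
    exact hvpar i hij
  · rintro x ⟨u, hu, rfl⟩
    intro i' hi'F
    show emb j u c i' = bb i'
    by_cases hb : blk i' = j
    · have hidx : idx j (pos i') = i' := by rw [← hb, idx_blk_pos]
      have := heFix u hu (pos i') (by rw [hidx]; exact hi'F)
      rw [hidx] at this
      simp only [emb, hb, if_pos rfl]
      exact this
    · have := hvfix (blk i') (pos i') (by rw [idx_blk_pos]; exact hi'F)
      rw [idx_blk_pos] at this
      simp only [emb, hb, if_neg hb, hcdef]
      exact this

end SAux

theorem stmt_10 (n : ℕ)
    (h : ∃ M, IsMatching n M ∧ Blocks n (n / 3 + 1) M) :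
    ∃ M', IsMatching (4 * n) M' ∧ Blocks (4 * n) (4 * n / 3 + 1) M' := by
  obtain ⟨M, hM, hB⟩ := h
  rcases Nat.eq_zero_or_pos n with rfl | hn
  · exfalso
    obtain ⟨e, heM, -⟩ := hB Set.univ ⟨∅, fun _ => false, by simp, by ext x; simp⟩
    obtain ⟨x, y, hxy, -⟩ := hM.1 e heM
    have hle : (Finset.univ.filter (fun i : Fin 0 => x i ≠ y i)).card ≤ 0 :=
      le_trans (Finset.card_filter_le _ _) (by simp)
    rw [QAdj] at hxy
    omega
  · exact ⟨SAux.lift M, SAux.lift_isMatching hM, SAux.lift_blocks hn hB⟩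
end

section
/- For every k ≥ 1, the set of even-parity vertices of Q_{2^k} can be partitioned into 2^k subsets A_1, ..., A_{2^k}, and the set of odd-parity vertices into 2^k subsets B_1, ..., B_{2^k}, such that every subcube of Q_{2^k} of dimension 2^{k-1} + 1 contains at least one vertex from each A_j and at least one vertex from each B_j. -/
open Finset

lemma half_card (k : ℕ) (hk : 1 ≤ k)
    (φ : (Fin k → ZMod 2) →ₗ[ZMod 2] ZMod 2) (hφ : φ ≠ 0) (c : ZMod 2) :
    (univ.filter (fun v => φ v = c)).card = 2 ^ (k - 1) := by
  have hne : ∀ a : ZMod 2, a ≠ 0 → a = 1 := by decide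
  obtain ⟨v0, hv0⟩ : ∃ v, φ v ≠ 0 := by
    by_contra h; push_neg at h; exact hφ (LinearMap.ext fun v => h v)
  have hv01 : φ v0 = 1 := hne _ hv0
  have hinvol : ∀ v : Fin k → ZMod 2, v + v0 + v0 = v := by
    intro v; funext i
    have : ∀ a b : ZMod 2, a + b + b = a := by decide
    simpa using this (v i) (v0 i)
  have hcards : ∀ d : ZMod 2,
      (univ.filter (fun v => φ v = d)).card = (univ.filter (fun v => φ v = d + 1)).card := by
    intro d
    apply Finset.card_bij' (fun v _ => v + v0) (fun v _ => v + v0)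
    · intro v hv; simp only [mem_filter, mem_univ, true_and] at hv ⊢
      rw [map_add, hv, hv01]
    · intro v hv; simp only [mem_filter, mem_univ, true_and] at hv ⊢
      rw [map_add, hv, hv01]
      have : ∀ a : ZMod 2, a + 1 + 1 = a := by decide
      exact this d
    · intro v _; exact hinvol v
    · intro v _; exact hinvol v
  have hcover : ∀ d : ZMod 2,
      (univ.filter (fun v => φ v = d)).card + (univ.filter (fun v => φ v = d + 1)).card
        = 2 ^ k := by
    intro d
    rw [← Finset.card_union_of_disjoint]
    · have : (univ.filter (fun v => φ v = d)) ∪ (univ.filter (fun v => φ v = d + 1)) = univ := by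
        ext v; simp only [mem_union, mem_filter, mem_univ, true_and, iff_true]
        have : ∀ a b : ZMod 2, a = b ∨ a = b + 1 := by decide
        exact this (φ v) d
      rw [this, card_univ]
      simp [ZMod.card]
    · rw [Finset.disjoint_filter]
      intro v _ h1 h2
      rw [h1] at h2
      have : ∀ d : ZMod 2, d ≠ d + 1 := by decide
      exact this d h2
  have h1 := hcards c
  have h2 := hcover c
  have hk2 : 2 ^ k = 2 * 2 ^ (k - 1) := by
    conv_lhs => rw [show k = (k - 1) + 1 by omega]
    ring
  omega

lemma key_s11 (k : ℕ) (hk : 1 ≤ k) (T : Finset (Fin k → ZMod 2)) (hT : 2 ^ (k - 1) < T.card)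
    (target : (Fin k → ZMod 2) × ZMod 2) :
    ∃ t ⊆ T, ∑ v ∈ t, ((v, 1) : (Fin k → ZMod 2) × ZMod 2) = target := by
  set s : Finset ((Fin k → ZMod 2) × ZMod 2) := T.image (fun v => (v, 1)) with hs
  have hinj : ∀ x ∈ T, ∀ y ∈ T,
      (fun v => ((v, 1) : (Fin k → ZMod 2) × ZMod 2)) x
        = (fun v => ((v, 1) : (Fin k → ZMod 2) × ZMod 2)) y → x = y :=
    fun a _ b _ h => congrArg Prod.fst h
  have hsplit : ∀ (f : ((Fin k → ZMod 2) × ZMod 2) →ₗ[ZMod 2] ZMod 2)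
      (p : (Fin k → ZMod 2) × ZMod 2),
      f p = f.comp (LinearMap.inl (ZMod 2) _ _) p.1 + p.2 * f (0, 1) := by
    intro f p
    have hp : p = (p.1, 0) + p.2 • ((0 : Fin k → ZMod 2), (1 : ZMod 2)) := by
      refine Prod.ext ?_ ?_ <;> simp [Prod.mk_add_mk]
    conv_lhs => rw [hp]
    rw [map_add, map_smul, smul_eq_mul]
    rfl
  have hspan : Submodule.span (ZMod 2) (s : Set ((Fin k → ZMod 2) × ZMod 2)) = ⊤ := by
    by_contra h
    obtain ⟨f, hf0, hker⟩ :=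
      Submodule.exists_le_ker_of_lt_top _ (lt_top_iff_ne_top.2 h)
    have hT0 : ∀ v ∈ T, f (v, 1) = 0 := by
      intro v hv
      have hm : ((v, 1) : (Fin k → ZMod 2) × ZMod 2)
          ∈ Submodule.span (ZMod 2) (s : Set ((Fin k → ZMod 2) × ZMod 2)) := by
        apply Submodule.subset_span
        simp only [hs, coe_image, Set.mem_image, mem_coe]
        exact ⟨v, hv, rfl⟩
      exact hker hm
    set φ := f.comp (LinearMap.inl (ZMod 2) (Fin k → ZMod 2) (ZMod 2)) with hφdef
    set c := f (0, 1) with hc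
    have hfv : ∀ v ∈ T, φ v + c = 0 := by
      intro v hv
      have h2 := hsplit f (v, 1)
      rw [hT0 v hv] at h2
      rw [hφdef, hc]; simpa using h2.symm
    by_cases hφ : φ = 0
    · have hTne : T.Nonempty := Finset.card_pos.1 (lt_of_le_of_lt (Nat.zero_le _) hT)
      obtain ⟨v, hv⟩ := hTne
      have h3 := hfv v hv
      rw [hφ] at h3
      simp at h3
      apply hf0
      apply LinearMap.ext
      intro p
      rw [hsplit f p, ← hφdef, hφ, ← hc, h3]
      simp
    · have hsub : T ⊆ univ.filter (fun v => φ v = -c) := by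
        intro v hv
        simp only [mem_filter, mem_univ, true_and]
        linear_combination hfv v hv
      have h4 := Finset.card_le_card hsub
      rw [half_card k hk φ hφ (-c)] at h4
      omega
  have hmem : target ∈ Submodule.span (ZMod 2) (s : Set ((Fin k → ZMod 2) × ZMod 2)) := by
    rw [hspan]; trivial
  rw [Submodule.mem_span_finset] at hmem
  obtain ⟨f, -, hf⟩ := hmem
  rw [Finset.sum_image hinj] at hf
  refine ⟨T.filter (fun u => f (u, 1) = 1), Finset.filter_subset _ _, ?_⟩
  rw [← hf, Finset.sum_filter]
  apply Finset.sum_congr rfl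
  intro u _
  have h5 : ∀ a : ZMod 2, (if a = 1 then ((u, 1) : (Fin k → ZMod 2) × ZMod 2) else 0)
      = a • ((u, 1) : (Fin k → ZMod 2) × ZMod 2) := by
    intro a
    have h01 : a = 0 ∨ a = 1 := by revert a; decide
    rcases h01 with h | h <;> simp [h]
  exact h5 _

lemma subcube_hit (k : ℕ) (hk : 1 ≤ k) (ι : Fin (2 ^ k) ≃ (Fin k → ZMod 2))
    (S : Set (Fin (2 ^ k) → Bool)) (hS : IsSubcube (2 ^ k) (2 ^ (k - 1) + 1) S)
    (target : (Fin k → ZMod 2) × ZMod 2) :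
    ∃ x ∈ S, ∑ i ∈ univ.filter (fun i => x i = true),
      ((ι i, 1) : (Fin k → ZMod 2) × ZMod 2) = target := by
  obtain ⟨F, b, hF, hSdef⟩ := hS
  have hle : 2 ^ (k - 1) + 1 ≤ 2 ^ k := by
    have h1 : 2 ^ k = 2 ^ (k - 1) * 2 := by
      rw [← pow_succ]; congr 1; omega
    have h2 : 1 ≤ 2 ^ (k - 1) := Nat.one_le_two_pow
    omega
  have hFcard : Fᶜ.card = 2 ^ (k - 1) + 1 := by
    rw [Finset.card_compl, hF]
    simp only [Fintype.card_fin]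
    exact Nat.sub_sub_self hle
  set T : Finset (Fin k → ZMod 2) := Fᶜ.image ι with hT
  have hTcard : T.card = 2 ^ (k - 1) + 1 := by
    rw [hT, Finset.card_image_of_injective _ ι.injective, hFcard]
  set c0 : (Fin k → ZMod 2) × ZMod 2 :=
    ∑ i ∈ F.filter (fun i => b i = true), ((ι i, 1) : (Fin k → ZMod 2) × ZMod 2) with hc0
  obtain ⟨t, hts, hsum⟩ := key_s11 k hk T (by omega) (target - c0)
  -- pull t back
  set t0 : Finset (Fin (2 ^ k)) := Fᶜ.filter (fun i => ι i ∈ t) with ht0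
  have ht0T : Fᶜ.image ι ⊇ t0.image ι := Finset.image_subset_image (Finset.filter_subset _ _)
  have himg : t0.image ι = t := by
    apply Finset.Subset.antisymm
    · intro v hv
      simp only [ht0, Finset.mem_image, Finset.mem_filter] at hv
      obtain ⟨i, ⟨_, hit⟩, rfl⟩ := hv
      exact hit
    · intro v hv
      have hvT : v ∈ T := hts hv
      rw [hT, Finset.mem_image] at hvT
      obtain ⟨i, hi, rfl⟩ := hvT
      rw [Finset.mem_image]
      exact ⟨i, by simp [ht0, hi, hv], rfl⟩
  set x : Fin (2 ^ k) → Bool := fun i => if i ∈ F then b i else decide (i ∈ t0) with hx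
  have hxS : x ∈ S := by
    rw [hSdef]
    intro i hi
    simp [hx, hi]
  refine ⟨x, hxS, ?_⟩
  have hfilter : univ.filter (fun i => x i = true) = F.filter (fun i => b i = true) ∪ t0 := by
    ext i
    by_cases hi : i ∈ F
    · have hnt : i ∉ t0 := by simp [ht0, hi]
      simp [hx, hi, hnt]
    · simp [hx, hi, ht0]
  rw [hfilter, Finset.sum_union]
  · have hst : ∑ i ∈ t0, ((ι i, 1) : (Fin k → ZMod 2) × ZMod 2) = target - c0 := by
      rw [← hsum, ← himg, Finset.sum_image (fun a _ b _ h => ι.injective h)]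
    rw [hst, ← hc0]
    abel
  · rw [Finset.disjoint_left]
    intro i hi
    simp only [Finset.mem_filter] at hi
    simp [ht0, hi.1]

theorem stmt_11 (k : ℕ) (hk : 1 ≤ k) :
    ∃ (A B : Fin (2 ^ k) → Set (Fin (2 ^ k) → Bool)),
      (∀ i j, i ≠ j → A i ∩ A j = ∅) ∧
      (⋃ j, A j) = {x | parity x = 0} ∧
      (∀ i j, i ≠ j → B i ∩ B j = ∅) ∧
      (⋃ j, B j) = {x | parity x = 1} ∧
      ∀ S, IsSubcube (2 ^ k) (2 ^ (k - 1) + 1) S →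
        ∀ j, (S ∩ A j).Nonempty ∧ (S ∩ B j).Nonempty := by
  have hcard : Fintype.card (Fin k → ZMod 2) = 2 ^ k := by
    simp [ZMod.card]
  obtain ⟨ι⟩ : Nonempty (Fin (2 ^ k) ≃ (Fin k → ZMod 2)) :=
    ⟨(Fintype.equivFinOfCardEq hcard).symm⟩
  set g : (Fin (2 ^ k) → Bool) → (Fin k → ZMod 2) × ZMod 2 :=
    fun x => ∑ i ∈ univ.filter (fun i => x i = true),
      ((ι i, 1) : (Fin k → ZMod 2) × ZMod 2) with hg
  have hg2 : ∀ x, (g x).2 = ((parity x : ℕ) : ZMod 2) := by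
    intro x
    rw [hg]
    rw [Prod.snd_sum]
    simp only [Finset.sum_const, nsmul_eq_mul, mul_one]
    rw [parity, ZMod.natCast_mod]
  have hpar : ∀ x : Fin (2 ^ k) → Bool, parity x = 0 ∨ parity x = 1 := fun x =>
    Nat.mod_two_eq_zero_or_one _
  refine ⟨fun j => {x | g x = (ι j, 0)}, fun j => {x | g x = (ι j, 1)}, ?_, ?_, ?_, ?_, ?_⟩
  · intro i j hij
    rw [Set.eq_empty_iff_forall_notMem]
    rintro x ⟨h1, h2⟩
    simp only [Set.mem_setOf_eq] at h1 h2
    exact hij (ι.injective (congrArg Prod.fst (h1.symm.trans h2)))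
  · ext x
    simp only [Set.mem_iUnion, Set.mem_setOf_eq]
    constructor
    · rintro ⟨j, hj⟩
      have h2 := congrArg Prod.snd hj
      rw [hg2] at h2
      rcases hpar x with h | h
      · exact h
      · rw [h] at h2; simp at h2
    · intro h0
      refine ⟨ι.symm (g x).1, ?_⟩
      refine Prod.ext (by simp) ?_
      rw [hg2, h0]; simp
  · intro i j hij
    rw [Set.eq_empty_iff_forall_notMem]
    rintro x ⟨h1, h2⟩
    simp only [Set.mem_setOf_eq] at h1 h2
    exact hij (ι.injective (congrArg Prod.fst (h1.symm.trans h2)))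
  · ext x
    simp only [Set.mem_iUnion, Set.mem_setOf_eq]
    constructor
    · rintro ⟨j, hj⟩
      have h2 := congrArg Prod.snd hj
      rw [hg2] at h2
      rcases hpar x with h | h
      · rw [h] at h2; simp at h2
      · exact h
    · intro h1
      refine ⟨ι.symm (g x).1, ?_⟩
      refine Prod.ext (by simp) ?_
      rw [hg2, h1]; simp
  · intro S hS j
    constructor
    · obtain ⟨x, hxS, hxg⟩ := subcube_hit k hk ι S hS (ι j, 0)
      exact ⟨x, hxS, hxg⟩
    · obtain ⟨x, hxS, hxg⟩ := subcube_hit k hk ι S hS (ι j, 1)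
      exact ⟨x, hxS, hxg⟩
end

section
/- For all n ≥ 1 and c ≥ 2, the set of even-parity vertices of Q_{c^n} can be partitioned into (2^{c-1})^n subsets, and likewise the odd-parity vertices into (2^{c-1})^n subsets, such that every subcube of Q_{c^n} of dimension c^n - c^{n-1} + 1 contains at least one vertex from each subset of each partition. -/
open Finset

lemma count_lemma (c : ℕ) [NeZero c] : ∀ (n : ℕ) (h : Fin n → Fin c → ZMod 2),
    (∀ j, h j 0 = 0) → ∀ ε : ZMod 2, ((∃ j, h j ≠ 0) ∨ ε ≠ 0) →
    c ^ (n - 1) ≤ (univ.filter fun f : Fin n → Fin c => ε + ∑ j, h j (f j) ≠ 0).card := by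
  intro n
  induction n with
  | zero =>
    intro h h0 ε hne
    have hε : ε ≠ 0 := by
      rcases hne with ⟨j, _⟩ | hε
      · exact absurd j.pos (by omega)
      · exact hε
    have hmem : (fun i => i.elim0 : Fin 0 → Fin c) ∈
        univ.filter fun f : Fin 0 → Fin c => ε + ∑ j, h j (f j) ≠ 0 := by
      rw [Finset.mem_filter]
      exact ⟨mem_univ _, by simpa using hε⟩
    calc c ^ (0 - 1) = 1 := by norm_num
      _ ≤ _ := Finset.card_pos.mpr ⟨_, hmem⟩
  | succ n ih =>
    intro h h0 ε hne
    have key : (univ.filter fun f : Fin (n+1) → Fin c => ε + ∑ j, h j (f j) ≠ 0).card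
        = ∑ v : Fin c, (univ.filter fun f : Fin n → Fin c =>
            (ε + h 0 v) + ∑ j, h j.succ (f j) ≠ 0).card := by
      rw [Finset.card_filter]
      rw [← Equiv.sum_comp (Fin.consEquiv (fun _ : Fin (n+1) => Fin c))
        (fun f : Fin (n+1) → Fin c => if ε + ∑ j, h j (f j) ≠ 0 then 1 else 0)]
      rw [Fintype.sum_prod_type]
      refine Finset.sum_congr rfl fun v _ => ?_
      rw [Finset.card_filter]
      refine Finset.sum_congr rfl fun f' _ => ?_
      congr 1
      simp [Fin.sum_univ_succ, add_assoc]
    rw [key]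
    by_cases hA : ∃ j : Fin n, h j.succ ≠ 0
    · obtain ⟨j0, hj0⟩ := hA
      have hn1 : 1 ≤ n := j0.pos
      have hpow : c ^ (n + 1 - 1) = c * c ^ (n - 1) := by
        calc c ^ (n + 1 - 1) = c ^ n := by rw [Nat.add_sub_cancel]
          _ = c ^ ((n-1)+1) := by rw [Nat.sub_add_cancel hn1]
          _ = c * c ^ (n-1) := by rw [pow_succ, mul_comm]
      calc c ^ (n + 1 - 1) = ∑ _v : Fin c, c ^ (n - 1) := by
            rw [Finset.sum_const, card_univ, Fintype.card_fin, smul_eq_mul, hpow]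
        _ ≤ _ := Finset.sum_le_sum fun v _ =>
            ih (fun j => h j.succ) (fun j => h0 j.succ) (ε + h 0 v) (Or.inl ⟨j0, hj0⟩)
    · push_neg at hA
      have hv : ∃ v : Fin c, ε + h 0 v ≠ 0 := by
        by_cases hε : ε = 0
        · subst hε
          rcases hne with ⟨j, hj⟩ | hε'
          · rcases Fin.eq_zero_or_eq_succ j with rfl | ⟨j', rfl⟩
            · obtain ⟨v, hv⟩ := Function.ne_iff.mp hj
              exact ⟨v, by simpa using hv⟩
            · exact absurd (hA j') hj
          · exact absurd rfl hε'
        · exact ⟨0, by simpa [h0 0] using hε⟩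
      obtain ⟨v0, hv0⟩ := hv
      have hcard : (univ.filter fun f : Fin n → Fin c =>
          (ε + h 0 v0) + ∑ j, h j.succ (f j) ≠ 0).card = c ^ n := by
        have hall : ∀ f ∈ (univ : Finset (Fin n → Fin c)),
            (ε + h 0 v0) + ∑ j, h j.succ (f j) ≠ 0 := by
          intro f _
          simp [hA, hv0]
        rw [filter_true_of_mem hall]
        simp [card_univ]
      calc c ^ (n + 1 - 1) = c ^ n := by norm_num
        _ ≤ _ := by
            rw [← hcard]
            exact Finset.single_le_sum (f := fun v : Fin c => (univ.filter fun f : Fin n → Fin c =>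
              (ε + h 0 v) + ∑ j, h j.succ (f j) ≠ 0).card) (fun v _ => Nat.zero_le _) (mem_univ v0)

section Defs

variable (c n : ℕ)

def emb (u : Fin (c-1)) : Fin c := ⟨u.1 + 1, by have := u.2; omega⟩

lemma emb_ne_zero [NeZero c] (u : Fin (c-1)) : emb c u ≠ 0 := by
  simp only [emb, Ne, Fin.ext_iff, Fin.val_zero]
  omega

lemma emb_injective : Function.Injective (emb c) := by
  intro u v h
  simp only [emb, Fin.mk.injEq] at h
  exact Fin.ext (by omega)

def dEq : Fin (c^n) ≃ (Fin n → Fin c) := finFunctionFinEquiv.symm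

abbrev Tgt := (Fin n → Fin (c-1) → ZMod 2) × ZMod 2

def Lmap : (Fin (c^n) → ZMod 2) →ₗ[ZMod 2] Tgt c n :=
  (LinearMap.pi fun j => LinearMap.pi fun u =>
      ∑ i ∈ Finset.univ.filter fun i => dEq c n i j = emb c u, LinearMap.proj i).prod
    (∑ i, LinearMap.proj i)

lemma Lmap_fst (v : Fin (c^n) → ZMod 2) (j : Fin n) (u : Fin (c-1)) :
    (Lmap c n v).1 j u = ∑ i ∈ Finset.univ.filter fun i => dEq c n i j = emb c u, v i := by
  simp [Lmap, LinearMap.pi_apply, LinearMap.sum_apply]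

lemma Lmap_snd (v : Fin (c^n) → ZMod 2) : (Lmap c n v).2 = ∑ i, v i := by
  simp [Lmap, LinearMap.sum_apply]

end Defs

section Surj

variable {c n : ℕ}

lemma decomp (φ : Tgt c n →ₗ[ZMod 2] ZMod 2) (y : Tgt c n) :
    φ y = (∑ j, ∑ u, y.1 j u * φ (Pi.single j (Pi.single u 1), 0)) + y.2 * φ (0, 1) := by
  have hy : y = (∑ j, ∑ u, (y.1 j u) • ((Pi.single j (Pi.single u (1:ZMod 2)), 0) : Tgt c n))
      + y.2 • ((0, 1) : Tgt c n) := by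
    refine Prod.ext ?_ ?_
    · funext j' u'
      simp [Prod.fst_sum, Finset.sum_apply, Pi.single_apply, apply_ite, Finset.sum_ite_eq', mul_ite]
    · simp [Prod.snd_sum]
  conv_lhs => rw [hy]
  rw [map_add, map_sum]
  simp_rw [map_sum, map_smul, smul_eq_mul]

end Surj

section Surj2

variable {c n : ℕ}

lemma Lmap_single (i : Fin (c^n)) :
    Lmap c n (Pi.single i 1)
      = (fun j u => if dEq c n i j = emb c u then 1 else 0, 1) := by
  refine Prod.ext ?_ ?_
  · funext j u
    rw [Lmap_fst, Finset.sum_pi_single']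
    simp
  · rw [Lmap_snd, Finset.sum_pi_single']
    simp

lemma Lmap_surj (hc : 2 ≤ c) (F : Finset (Fin (c^n))) (hF : F.card < c^(n-1)) :
    Submodule.map (Lmap c n) (Submodule.pi (F : Set (Fin (c^n)))
      fun _ => (⊥ : Submodule (ZMod 2) (ZMod 2))) = ⊤ := by
  haveI : NeZero c := ⟨by omega⟩
  by_contra hne
  obtain ⟨φ, hφ0, hφ⟩ := Submodule.exists_dual_map_eq_bot_of_lt_top
    (lt_top_iff_ne_top.mpr hne) inferInstance
  set W := Submodule.pi (F : Set (Fin (c^n))) fun _ => (⊥ : Submodule (ZMod 2) (ZMod 2)) with hW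
  have hkill : ∀ v ∈ W, φ (Lmap c n v) = 0 := by
    intro v hv
    have hmem : φ (Lmap c n v) ∈ Submodule.map φ (Submodule.map (Lmap c n) W) :=
      Submodule.mem_map_of_mem (Submodule.mem_map_of_mem hv)
    rwa [hφ, Submodule.mem_bot] at hmem
  set hfun : Fin n → Fin c → ZMod 2 := fun j v =>
    ∑ u, (if v = emb c u then 1 else 0) * φ (Pi.single j (Pi.single u 1), 0) with hhfun
  have hfun0 : ∀ j, hfun j 0 = 0 := by
    intro j
    simp only [hhfun]
    refine Finset.sum_eq_zero fun u _ => ?_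
    rw [if_neg (fun h => emb_ne_zero c u h.symm), zero_mul]
  have hfe : ∀ j u, hfun j (emb c u) = φ ((Pi.single j (Pi.single u 1), 0) : Tgt c n) := by
    intro j u
    simp only [hhfun]
    rw [Finset.sum_eq_single u]
    · rw [if_pos rfl, one_mul]
    · intro u' _ hne'
      rw [if_neg (fun h => hne' (emb_injective c h).symm), zero_mul]
    · intro hu; exact absurd (Finset.mem_univ u) hu
  have hg : ∀ i, φ (Lmap c n (Pi.single i 1))
      = φ ((0,1) : Tgt c n) + ∑ j, hfun j (dEq c n i j) := by
    intro i
    rw [Lmap_single, decomp]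
    simp only [hhfun]
    rw [one_mul, add_comm]
  have hnz : (∃ j, hfun j ≠ 0) ∨ φ ((0,1) : Tgt c n) ≠ 0 := by
    by_contra hcon
    push_neg at hcon
    obtain ⟨hall, hz⟩ := hcon
    apply hφ0
    apply LinearMap.ext
    intro y
    rw [decomp]
    have hs : ∀ j u, φ ((Pi.single j (Pi.single u 1), 0) : Tgt c n) = 0 := by
      intro j u
      rw [← hfe j u, hall j]
      simp
    simp [hs, hz]
  have hsub : (univ.filter fun i => φ (Lmap c n (Pi.single i 1)) ≠ 0) ⊆ F := by
    intro i hi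
    rw [mem_filter] at hi
    by_contra hiF
    refine hi.2 (hkill _ ?_)
    rw [hW, Submodule.mem_pi]
    intro i' hi'
    rw [Submodule.mem_bot]
    exact Pi.single_eq_of_ne (fun h => hiF (by rw [← h]; exact hi')) 1
  have hcard : (univ.filter fun i => φ (Lmap c n (Pi.single i 1)) ≠ 0).card
      = (univ.filter fun f : Fin n → Fin c =>
          φ ((0,1) : Tgt c n) + ∑ j, hfun j (f j) ≠ 0).card := by
    refine Finset.card_bij' (fun i _ => dEq c n i) (fun f _ => (dEq c n).symm f) ?_ ?_ ?_ ?_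
    · intro i hi
      rw [mem_filter] at hi ⊢
      exact ⟨mem_univ _, by rw [← hg i]; exact hi.2⟩
    · intro f hf
      rw [mem_filter] at hf ⊢
      refine ⟨mem_univ _, ?_⟩
      rw [hg]
      simpa using hf.2
    · intro i _; exact (dEq c n).symm_apply_apply i
    · intro f _; exact (dEq c n).apply_symm_apply f
  have hcount := count_lemma c n hfun hfun0 _ hnz
  have hle := Finset.card_le_card hsub
  rw [hcard] at hle
  exact Nat.lt_irrefl _ (Nat.lt_of_lt_of_le hF (hcount.trans hle))

end Surj2

def bZ (b : Bool) : ZMod 2 := if b then 1 else 0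
def bB (z : ZMod 2) : Bool := decide (z = 1)

lemma bZ_bB : ∀ z, bZ (bB z) = z := by decide
lemma bB_bZ : ∀ b, bB (bZ b) = b := by decide

section Exists
variable {c n : ℕ}

lemma exists_vertex (hc : 2 ≤ c) (F : Finset (Fin (c^n))) (hF : F.card < c^(n-1))
    (b : Fin (c^n) → Bool) (t : Tgt c n) :
    ∃ x : Fin (c^n) → Bool, (∀ i ∈ F, x i = b i) ∧ Lmap c n (fun i => bZ (x i)) = t := by
  have hsurj := Lmap_surj hc F hF
  set b0 : Fin (c^n) → ZMod 2 := fun i => if i ∈ F then bZ (b i) else 0 with hb0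
  have hmem : t - Lmap c n b0 ∈ Submodule.map (Lmap c n)
      (Submodule.pi (F : Set (Fin (c^n))) fun _ => (⊥ : Submodule (ZMod 2) (ZMod 2))) := by
    rw [hsurj]; trivial
  obtain ⟨w, hwW, hw⟩ := hmem
  refine ⟨fun i => bB (b0 i + w i), ?_, ?_⟩
  · intro i hi
    have hwi : w i = 0 := by
      have h2 := Submodule.mem_pi.mp hwW i hi
      simpa using h2
    simp only [hb0, if_pos hi, hwi, add_zero]
    exact bB_bZ _
  · have heq : (fun i => bZ (bB (b0 i + w i))) = fun i => b0 i + w i :=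
      funext fun i => bZ_bB _
    rw [heq]
    have : (fun i => b0 i + w i) = b0 + w := rfl
    rw [this, map_add, hw]
    abel

end Exists


def zEq : ZMod 2 ≃ Fin 2 := Equiv.refl (Fin 2)

def Dcode (c n : ℕ) : (Fin n → Fin (c-1) → ZMod 2) ≃ Fin ((2^(c-1))^n) :=
  (Equiv.piCongrRight fun _ =>
    (Equiv.piCongrRight fun _ => zEq).trans finFunctionFinEquiv).trans finFunctionFinEquiv

lemma zmod_cast_zero_iff (m : ℕ) : (m : ZMod 2) = 0 ↔ m % 2 = 0 := by
  constructor
  · intro h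
    have h2 : ((m % 2 : ℕ) : ZMod 2) = 0 := by rwa [ZMod.natCast_mod]
    rcases Nat.mod_two_eq_zero_or_one m with h1 | h1
    · exact h1
    · rw [h1] at h2
      simp at h2
  · intro h
    rw [← ZMod.natCast_mod, h]
    simp

lemma zmod_cast_one_iff (m : ℕ) : (m : ZMod 2) = 1 ↔ m % 2 = 1 := by
  constructor
  · intro h
    rcases Nat.mod_two_eq_zero_or_one m with h1 | h1
    · exfalso
      have h0 : (m : ZMod 2) = 0 := (zmod_cast_zero_iff m).mpr h1
      rw [h0] at h
      exact absurd h (by decide)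
    · exact h1
  · intro h
    rw [← ZMod.natCast_mod, h]
    simp

lemma sum_bZ {N : ℕ} (x : Fin N → Bool) :
    (∑ i, bZ (x i)) = (((Finset.univ.filter fun i => x i = true).card : ℕ) : ZMod 2) := by
  simp only [bZ]
  rw [Finset.sum_boole]

lemma parity_of_sum_zero {N : ℕ} (x : Fin N → Bool) (h : (∑ i, bZ (x i)) = 0) :
    parity x = 0 := by
  have := (zmod_cast_zero_iff _).mp (by rw [← sum_bZ x]; exact h)
  exact this

lemma parity_of_sum_one {N : ℕ} (x : Fin N → Bool) (h : (∑ i, bZ (x i)) = 1) :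
    parity x = 1 := by
  have := (zmod_cast_one_iff _).mp (by rw [← sum_bZ x]; exact h)
  exact this

theorem stmt_12 (n c : ℕ) (hn : 1 ≤ n) (hc : 2 ≤ c) :
    ∃ (A B : Fin ((2 ^ (c - 1)) ^ n) → Set (Fin (c ^ n) → Bool)),
      (∀ i j, i ≠ j → A i ∩ A j = ∅) ∧
      (⋃ j, A j) = {x | parity x = 0} ∧
      (∀ i j, i ≠ j → B i ∩ B j = ∅) ∧
      (⋃ j, B j) = {x | parity x = 1} ∧
      ∀ S, IsSubcube (c ^ n) (c ^ n - c ^ (n - 1) + 1) S →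
        ∀ j, (S ∩ A j).Nonempty ∧ (S ∩ B j).Nonempty := by
  haveI : NeZero c := ⟨by omega⟩
  refine ⟨fun j => {x | parity x = 0 ∧ Dcode c n ((Lmap c n fun i => bZ (x i)).1) = j},
          fun j => {x | parity x = 1 ∧ Dcode c n ((Lmap c n fun i => bZ (x i)).1) = j},
          ?_, ?_, ?_, ?_, ?_⟩
  · intro i j hij
    ext x
    simp only [Set.mem_inter_iff, Set.mem_setOf_eq, Set.mem_empty_iff_false, iff_false]
    rintro ⟨⟨_, h1⟩, ⟨_, h2⟩⟩
    exact hij (h1 ▸ h2 ▸ rfl)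
  · ext x
    simp only [Set.mem_iUnion, Set.mem_setOf_eq]
    constructor
    · rintro ⟨j, hj, _⟩
      exact hj
    · intro hx
      exact ⟨_, hx, rfl⟩
  · intro i j hij
    ext x
    simp only [Set.mem_inter_iff, Set.mem_setOf_eq, Set.mem_empty_iff_false, iff_false]
    rintro ⟨⟨_, h1⟩, ⟨_, h2⟩⟩
    exact hij (h1 ▸ h2 ▸ rfl)
  · ext x
    simp only [Set.mem_iUnion, Set.mem_setOf_eq]
    constructor
    · rintro ⟨j, hj, _⟩
      exact hj
    · intro hx
      exact ⟨_, hx, rfl⟩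
  · intro S hS j
    obtain ⟨F, b, hFc, hSe⟩ := hS
    have hp1 : 0 < c ^ (n-1) := pow_pos (by omega) _
    have hp2 : c ^ (n-1) ≤ c ^ n := Nat.pow_le_pow_right (by omega) (by omega)
    have hF : F.card < c ^ (n-1) := by omega
    constructor
    · obtain ⟨x, hx1, hx2⟩ := exists_vertex hc F hF b ((Dcode c n).symm j, 0)
      have hxS : x ∈ S := by rw [hSe]; exact hx1
      have hpar : parity x = 0 := by
        refine parity_of_sum_zero x ?_
        rw [← Lmap_snd c n, hx2]
      have hD : Dcode c n ((Lmap c n fun i => bZ (x i)).1) = j := by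
        rw [hx2]
        exact (Dcode c n).apply_symm_apply j
      exact ⟨x, hxS, hpar, hD⟩
    · obtain ⟨x, hx1, hx2⟩ := exists_vertex hc F hF b ((Dcode c n).symm j, 1)
      have hxS : x ∈ S := by rw [hSe]; exact hx1
      have hpar : parity x = 1 := by
        refine parity_of_sum_one x ?_
        rw [← Lmap_snd c n, hx2]
      have hD : Dcode c n ((Lmap c n fun i => bZ (x i)).1) = j := by
        rw [hx2]
        exact (Dcode c n).apply_symm_apply j
      exact ⟨x, hxS, hpar, hD⟩
end

section
/- For every d ≥ 0, there exist 4^{d+1} pairwise disjoint matchings of Q_{3^{d+1}}, of equal cardinality, which partition the edge set of Q_{3^{d+1}}, such that every (3^d + 1)-dimensional subcube of Q_{3^{d+1}} contains an edge of each matching. -/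
namespace S14


abbrev Dg (m : ℕ) := Fin m → Fin 3

/-- the three "bit" functionals on colors -/
def h (t : Fin 3) (a : Fin 4) : ZMod 2 :=
  if t = 0 then ((a.val % 2 : ℕ) : ZMod 2)
  else if t = 1 then ((a.val / 2 : ℕ) : ZMod 2)
  else ((a.val % 2 + a.val / 2 : ℕ) : ZMod 2)

def offs (s t : Fin 3) : ZMod 2 := if t = s + 1 then 1 else 0

def c3 (s : Fin 3) (p q : ZMod 2) : Fin 4 :=
  if s = 0 then ⟨((p+q).val + 2*p.val) % 4, Nat.mod_lt _ (by norm_num)⟩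
  else if s = 1 then ⟨(q.val + 2*(p+q).val) % 4, Nat.mod_lt _ (by norm_num)⟩
  else ⟨(p.val + 2*q.val) % 4, Nat.mod_lt _ (by norm_num)⟩

lemma c3_spec : ∀ (s : Fin 3) (a : Fin 4), c3 s (h (s+1) a) (h (s+2) a) = a := by decide

lemma h_sum : ∀ a : Fin 4, h 0 a + h 1 a + h 2 a = 0 := by decide

lemma exists_adjust : ∀ g : Fin 3 → ZMod 2, g 0 + g 1 + g 2 = 0 →
    ∀ a : Fin 4, ∃ a' : Fin 4, ∀ t, h t a' = h t a + g t := by decide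

lemma proper_core : ∀ s s' : Fin 3, s ≠ s' → ∀ u : Fin 3 → ZMod 2,
    c3 s (u (s+1) + offs s (s+1)) (u (s+2) + offs s (s+2)) ≠
    c3 s' (u (s'+1) + offs s' (s'+1)) (u (s'+2) + offs s' (s'+2)) := by decide

lemma fin3_cases_ne : ∀ p q r t : Fin 3, p ≠ q → q ≠ r → p ≠ r → t ≠ q → t = p ∨ t = r := by decide


def U {m : ℕ} (ℓ : Fin m) (t : Fin 3) (x : Dg m → ZMod 2) : ZMod 2 :=
  ∑ τ : Dg m, if τ ℓ = t then x τ else 0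
def par {m : ℕ} (x : Dg m → ZMod 2) : ZMod 2 := ∑ τ : Dg m, x τ

lemma zz : ∀ a : ZMod 2, a + a = 0 := by decide

def sl {m : ℕ} (u : Fin 3) (E : Finset (Dg (m+1))) : Finset (Dg m) :=
  (E.filter (fun τ => τ 0 = u)).image Fin.tail

lemma mem_sl {m : ℕ} {u : Fin 3} {E : Finset (Dg (m+1))} {τ' : Dg m} :
    τ' ∈ sl u E ↔ Fin.cons u τ' ∈ E := by
  constructor
  · rintro hm
    obtain ⟨τ, hτ, rfl⟩ := Finset.mem_image.mp hm
    obtain ⟨hτE, hτ0⟩ := Finset.mem_filter.mp hτ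
    rw [← hτ0, Fin.cons_self_tail]
    exact hτE
  · intro hc
    exact Finset.mem_image.mpr ⟨Fin.cons u τ', Finset.mem_filter.mpr ⟨hc, Fin.cons_zero _ _⟩,
      Fin.tail_cons _ _⟩

lemma card_sl {m : ℕ} (u : Fin 3) (E : Finset (Dg (m+1))) :
    (sl u E).card = (E.filter (fun τ => τ 0 = u)).card := by
  apply Finset.card_image_of_injOn
  intro τ hτ τ' hτ' htt
  obtain ⟨_, h0⟩ := Finset.mem_filter.mp hτ
  obtain ⟨_, h0'⟩ := Finset.mem_filter.mp hτ'
  rw [← Fin.cons_self_tail τ, ← Fin.cons_self_tail τ', h0, h0', htt]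

lemma card_sum {m : ℕ} (E : Finset (Dg (m+1))) :
    E.card = ∑ u : Fin 3, (sl u E).card := by
  rw [Finset.card_eq_sum_card_fiberwise (f := fun τ => τ 0) (t := Finset.univ)
    (fun x _ => Finset.mem_univ _)]
  exact Finset.sum_congr rfl fun u _ => (card_sl u E).symm

lemma card_Dg (m : ℕ) : Fintype.card (Dg m) = 3^m := by
  simp [Fintype.card_fun]

lemma card_sl_le {m : ℕ} (u : Fin 3) (E : Finset (Dg (m+1))) : (sl u E).card ≤ 3^m :=
  le_trans (Finset.card_le_univ _) (le_of_eq (by simp [card_Dg]))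

lemma exists_big_slab {m : ℕ} (E : Finset (Dg (m+1))) (B : ℕ) (hB : 3*B < 3*E.card) :
    ∃ u, B < 3 * (sl u E).card := by
  by_contra hc
  push_neg at hc
  have h0 := hc 0; have h1 := hc 1; have h2 := hc 2
  have := card_sum E
  rw [Fin.sum_univ_three] at this
  omega

lemma slab_nonempty {m : ℕ} (E : Finset (Dg (m+1))) (hE : 2*3^(m+1) < 3*E.card) (t : Fin 3) :
    (sl t E).Nonempty := by
  rw [← Finset.card_pos]
  have hsum : (sl t E).card + ∑ u ∈ Finset.univ.erase t, (sl u E).card = E.card := by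
    rw [card_sum E]
    exact Finset.add_sum_erase Finset.univ (fun u => (sl u E).card) (Finset.mem_univ t)
  have hrest : ∑ u ∈ Finset.univ.erase t, (sl u E).card ≤ 2*3^m := by
    have h1 : ∑ u ∈ Finset.univ.erase t, (sl u E).card
        ≤ ∑ _u ∈ Finset.univ.erase t, (3^m : ℕ) :=
      Finset.sum_le_sum (fun u _ => card_sl_le u E)
    have h2 : ∑ _u ∈ Finset.univ.erase t, (3^m : ℕ) = 2*3^m := by
      rw [Finset.sum_const, Finset.card_erase_of_mem (Finset.mem_univ t)]
      simp [mul_comm]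
    omega
  have hp : (3:ℕ)^(m+1) = 3*3^m := by ring
  omega

def slice {m : ℕ} (u : Fin 3) (x : Dg (m+1) → ZMod 2) : Dg m → ZMod 2 :=
  fun τ => x (Fin.cons u τ)

lemma sum_decomp {m : ℕ} (f : Dg (m+1) → ZMod 2) :
    ∑ τ : Dg (m+1), f τ = ∑ u : Fin 3, ∑ τ : Dg m, f (Fin.cons u τ) := by
  have e1 : ∑ τ : Dg (m+1), f τ = ∑ p : Fin 3 × Dg m, f (Fin.cons p.1 p.2) :=
    (Fintype.sum_equiv (Fin.consEquiv (fun _ => Fin 3)) (fun p => f (Fin.cons p.1 p.2)) f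
      (fun p => by simp [Fin.consEquiv])).symm
  rw [e1, Fintype.sum_prod_type]
lemma par_decomp {m : ℕ} (x : Dg (m+1) → ZMod 2) :
    par x = ∑ u : Fin 3, par (slice u x) := sum_decomp x
lemma U_zero {m : ℕ} (t : Fin 3) (x : Dg (m+1) → ZMod 2) :
    U 0 t x = par (slice t x) := by
  rw [U, sum_decomp]
  rw [Fin.sum_univ_three]
  have h1 : ∀ u : Fin 3, ∑ τ : Dg m, (if (Fin.cons u τ : Dg (m+1)) 0 = t then x (Fin.cons u τ) else 0)
      = if u = t then par (slice u x) else 0 := by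
    intro u
    by_cases hu : u = t <;> simp [hu, Fin.cons_zero, par, slice]
  rw [h1, h1, h1]
  fin_cases t <;> simp
lemma U_succ {m : ℕ} (ℓ : Fin m) (t : Fin 3) (x : Dg (m+1) → ZMod 2) :
    U ℓ.succ t x = ∑ u : Fin 3, U ℓ t (slice u x) := by
  rw [U, sum_decomp]
  apply Finset.sum_congr rfl
  intro u _
  simp [U, slice, Fin.cons_succ]
lemma U_row {m : ℕ} (ℓ : Fin m) (x : Dg m → ZMod 2) :
    ∑ t : Fin 3, U ℓ t x = par x := by
  rw [par]
  unfold U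
  rw [Finset.sum_comm]
  apply Finset.sum_congr rfl
  intro τ _
  simp

/-- parity of a slab-shaped assignment: designated coordinate δ gets A, other members of W get 0,
    non-members get p. -/
lemma par_design {m : ℕ} (W : Finset (Dg m)) (δ : Dg m) (hδ : δ ∈ W) (A : ZMod 2)
    (p : Dg m → ZMod 2) :
    par (fun τ => if τ ∈ W then (if τ = δ then A else 0) else p τ)
      = A + ∑ τ : Dg m, (if τ ∈ W then 0 else p τ) := by
  rw [par]
  have e : ∀ τ : Dg m, (if τ ∈ W then (if τ = δ then A else 0) else p τ)
      = (if τ = δ then A else 0) + (if τ ∈ W then 0 else p τ) := by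
    intro τ
    by_cases h1 : τ ∈ W
    · by_cases h2 : τ = δ
      · subst h2; simp [hδ]
      · simp [h1, h2]
    · have : τ ≠ δ := fun hh => h1 (hh ▸ hδ)
      simp [h1, this]
  rw [Finset.sum_congr rfl (fun τ _ => e τ), Finset.sum_add_distrib,
    Finset.sum_ite_eq' Finset.univ δ]
  simp

lemma L2 : ∀ (R : ℕ) (E : Finset (Dg R)) (pins : Dg R → ZMod 2)
    (D : Fin R → Fin 3 → ZMod 2) (S : ZMod 2),
    (∀ ℓ, ∑ t, D ℓ t = S) → 2*3^R < 3*E.card →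
    ∃ x : Dg R → ZMod 2, (∀ τ ∉ E, x τ = pins τ) ∧ (∀ ℓ t, U ℓ t x = D ℓ t) ∧ par x = S := by
  intro R
  induction R with
  | zero =>
    intro E pins D S hD hE
    have hne : E.Nonempty := Finset.card_pos.mp (by omega)
    obtain ⟨τ₀, hτ₀⟩ := hne
    refine ⟨fun _ => S, ?_, ?_, ?_⟩
    · intro τ hτ
      exact absurd (Subsingleton.elim τ τ₀ ▸ hτ₀) hτ
    · intro ℓ; exact ℓ.elim0
    · rw [par]
      rw [Finset.sum_const, Finset.card_univ, card_Dg]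
      simp
  | succ R IH =>
    intro E pins D S hD hE
    have hp : (3:ℕ)^(R+1) = 3*3^R := by ring
    obtain ⟨us, hus⟩ := exists_big_slab E (2*3^R) (by omega)
    have hne : ∀ t, (sl t E).Nonempty := slab_nonempty E hE
    -- designated adjuster coordinates
    set δ : Fin 3 → Dg R := fun t => (hne t).choose with hδdef
    have hδ : ∀ t, δ t ∈ sl t E := fun t => (hne t).choose_spec
    set pp : Fin 3 → ZMod 2 :=
      fun t => ∑ τ' : Dg R, (if τ' ∈ sl t E then 0 else pins (Fin.cons t τ')) with hppdef
    set adj : Fin 3 → ZMod 2 := fun t => D 0 t + pp t with hadjdef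
    set outv : Dg (R+1) → ZMod 2 := fun τ =>
      if τ ∈ E then (if Fin.tail τ = δ (τ 0) then adj (τ 0) else 0) else pins τ with houtdef
    have hov : ∀ u, slice u outv = fun τ' =>
        if τ' ∈ sl u E then (if τ' = δ u then adj u else 0) else pins (Fin.cons u τ') := by
      intro u
      funext τ'
      simp only [slice, houtdef, Fin.cons_zero, Fin.tail_cons]
      by_cases hm : Fin.cons u τ' ∈ E
      · simp [hm, mem_sl.mpr hm]
      · have : τ' ∉ sl u E := fun hh => hm (mem_sl.mp hh)
        simp [hm, this]
    have hovpar : ∀ u, par (slice u outv) = D 0 u := by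
      intro u
      rw [hov u, par_design (sl u E) (δ u) (hδ u) (adj u) (fun τ' => pins (Fin.cons u τ'))]
      show adj u + pp u = D 0 u
      rw [hadjdef]
      simp only []
      rw [add_assoc, zz, add_zero]
    -- contributions of other slabs
    set C : Fin R → Fin 3 → ZMod 2 :=
      fun ℓ t => ∑ u ∈ Finset.univ.erase us, U ℓ t (slice u outv) with hCdef
    set P : ZMod 2 := ∑ u ∈ Finset.univ.erase us, par (slice u outv) with hPdef
    have hCrow : ∀ ℓ, ∑ t, C ℓ t = P := by
      intro ℓ
      rw [hCdef, hPdef]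
      simp only []
      rw [Finset.sum_comm]
      exact Finset.sum_congr rfl fun u _ => U_row ℓ _
    set D' : Fin R → Fin 3 → ZMod 2 := fun ℓ t => D ℓ.succ t + C ℓ t with hD'def
    have hD'row : ∀ ℓ, ∑ t, D' ℓ t = S + P := by
      intro ℓ
      rw [hD'def]
      simp only []
      rw [Finset.sum_add_distrib, hD ℓ.succ, hCrow ℓ]
    obtain ⟨xr, hxr1, hxr2, hxr3⟩ := IH (sl us E) (fun τ' => pins (Fin.cons us τ')) D' (S + P)
      hD'row (by omega)
    set x : Dg (R+1) → ZMod 2 := fun τ => if τ 0 = us then xr (Fin.tail τ) else outv τ with hxdef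
    have hslice_us : slice us x = xr := by
      funext τ'
      simp [slice, hxdef, Fin.cons_zero, Fin.tail_cons]
    have hslice_ne : ∀ u, u ≠ us → slice u x = slice u outv := by
      intro u hu
      funext τ'
      simp [slice, hxdef, Fin.cons_zero, hu]
    have hPval : P = ∑ u ∈ Finset.univ.erase us, D 0 u := by
      rw [hPdef]
      exact Finset.sum_congr rfl fun u _ => hovpar u
    refine ⟨x, ?_, ?_, ?_⟩
    · intro τ hτ
      by_cases h0 : τ 0 = us
      · have hts : Fin.cons us (Fin.tail τ) = τ := by rw [← h0]; exact Fin.cons_self_tail τ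
        have : Fin.tail τ ∉ sl us E := fun hh => hτ (hts ▸ mem_sl.mp hh)
        simp only [hxdef]
        rw [if_pos h0, hxr1 _ this, hts]
      · simp only [hxdef, if_neg h0, houtdef]
        rw [if_neg hτ]
    · intro ℓ t
      induction ℓ using Fin.cases with
      | zero =>
        rw [U_zero]
        by_cases ht : t = us
        · subst ht
          rw [hslice_us, hxr3]
          have e1 : D 0 t + ∑ u ∈ Finset.univ.erase t, D 0 u = S := by
            rw [Finset.add_sum_erase _ _ (Finset.mem_univ t)]; exact hD 0
          rw [hPval, ← e1, add_assoc, zz, add_zero]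
        · rw [hslice_ne t ht, hovpar t]
      | succ ℓ =>
        rw [U_succ, ← Finset.add_sum_erase _ _ (Finset.mem_univ us), hslice_us, hxr2 ℓ t]
        have : ∑ u ∈ Finset.univ.erase us, U ℓ t (slice u x)
            = ∑ u ∈ Finset.univ.erase us, U ℓ t (slice u outv) := by
          apply Finset.sum_congr rfl
          intro u hu
          rw [hslice_ne u (Finset.mem_erase.mp hu).1]
        have hC' : ∑ u ∈ Finset.univ.erase us, U ℓ t (slice u outv) = C ℓ t := rfl
        have hD'' : D' ℓ t = D ℓ.succ t + C ℓ t := rfl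
        rw [this, hC', hD'', add_assoc, zz, add_zero]
    · rw [par_decomp, ← Finset.add_sum_erase _ _ (Finset.mem_univ us), hslice_us, hxr3]
      have : ∑ u ∈ Finset.univ.erase us, par (slice u x)
          = ∑ u ∈ Finset.univ.erase us, par (slice u outv) := by
        apply Finset.sum_congr rfl
        intro u hu
        rw [hslice_ne u (Finset.mem_erase.mp hu).1]
      have hP' : ∑ u ∈ Finset.univ.erase us, par (slice u outv) = P := rfl
      rw [this, hP', add_assoc, zz, add_zero]


-- additional small decidable facts
lemma offs_vp2 : ∀ v : Fin 3, offs (v+2) v = 1 := by decide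
lemma offs_vp1 : ∀ v : Fin 3, offs (v+1) v = 0 := by decide
lemma zmod2_cases : ∀ z : ZMod 2, z ≠ 1 → z = 0 := by decide
lemma fin3_facts : ∀ v : Fin 3, v+1 ≠ v ∧ v+2 ≠ v ∧ v+2 ≠ v+1 ∧ v+1 ≠ v+2 := by decide

/-- The recursion branch of the main lemma: recurse into slab `u₀`, provided every other
slab is either nonempty (has a free adjuster) or fully pinned with matching parity. -/
lemma auxrec (m : ℕ)
    (IH : ∀ (F : Finset (Dg m)) (pins : Dg m → ZMod 2) (a : Fin m → Fin 4)
      (ε : Fin m → ZMod 2), 3^m < 3*F.card →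
      ∃ σ ∈ F, ∃ x : Dg m → ZMod 2, (∀ τ ∉ F, x τ = pins τ) ∧
        ∀ ℓ t, t ≠ σ ℓ → U ℓ t x = h t (a ℓ) + offs (σ ℓ) t + ε ℓ)
    (F : Finset (Dg (m+1))) (pins : Dg (m+1) → ZMod 2) (a : Fin (m+1) → Fin 4)
    (ε : Fin (m+1) → ZMod 2) (u₀ : Fin 3)
    (hbig : 3^m < 3*(sl u₀ F).card)
    (hoth : ∀ t, t ≠ u₀ → (sl t F).Nonempty ∨ (sl t F = ∅ ∧
      (∑ τ' : Dg m, pins (Fin.cons t τ')) = h t (a 0) + offs u₀ t + ε 0)) :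
    ∃ σ ∈ F, ∃ x : Dg (m+1) → ZMod 2, (∀ τ ∉ F, x τ = pins τ) ∧
      ∀ ℓ t, t ≠ σ ℓ → U ℓ t x = h t (a ℓ) + offs (σ ℓ) t + ε ℓ := by
  classical
  set tgt0 : Fin 3 → ZMod 2 := fun t => h t (a 0) + offs u₀ t + ε 0 with htgt0
  set pp : Fin 3 → ZMod 2 :=
    fun t => ∑ τ' : Dg m, (if τ' ∈ sl t F then 0 else pins (Fin.cons t τ')) with hppdef
  set δ : Fin 3 → Dg m := fun t =>
    if ht : (sl t F).Nonempty then ht.choose else (fun _ => 0) with hδdef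
  have hδ : ∀ t, (sl t F).Nonempty → δ t ∈ sl t F := by
    intro t ht
    simp only [hδdef, dif_pos ht]
    exact ht.choose_spec
  set adj : Fin 3 → ZMod 2 := fun t => tgt0 t + pp t with hadjdef
  set outv : Dg (m+1) → ZMod 2 := fun τ =>
    if τ ∈ F then (if Fin.tail τ = δ (τ 0) then adj (τ 0) else 0) else pins τ with houtdef
  have hov : ∀ u, slice u outv = fun τ' =>
      if τ' ∈ sl u F then (if τ' = δ u then adj u else 0) else pins (Fin.cons u τ') := by
    intro u
    funext τ'
    simp only [slice, houtdef, Fin.cons_zero, Fin.tail_cons]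
    by_cases hm : Fin.cons u τ' ∈ F
    · simp [hm, mem_sl.mpr hm]
    · have : τ' ∉ sl u F := fun hh => hm (mem_sl.mp hh)
      simp [hm, this]
  have hovpar : ∀ t, t ≠ u₀ → par (slice t outv) = tgt0 t := by
    intro t ht
    rcases hoth t ht with hne | ⟨hemp, hmatch⟩
    · rw [hov t, par_design (sl t F) (δ t) (hδ t hne) (adj t) (fun τ' => pins (Fin.cons t τ'))]
      have : adj t = tgt0 t + pp t := rfl
      rw [this, add_assoc]
      have : pp t = ∑ τ' : Dg m, (if τ' ∈ sl t F then 0 else pins (Fin.cons t τ')) := rfl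
      rw [← this, zz, add_zero]
    · rw [hov t]
      have he : (fun τ' => if τ' ∈ sl t F then (if τ' = δ t then adj t else 0)
          else pins (Fin.cons t τ')) = fun τ' => pins (Fin.cons t τ') := by
        funext τ'
        rw [hemp]
        simp
      rw [he]
      exact hmatch
  set C : Fin m → Fin 3 → ZMod 2 :=
    fun ℓ t => ∑ u ∈ Finset.univ.erase u₀, U ℓ t (slice u outv) with hCdef
  set P : ZMod 2 := ∑ u ∈ Finset.univ.erase u₀, par (slice u outv) with hPdef
  have hCrow : ∀ ℓ, ∑ t, C ℓ t = P := by
    intro ℓ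
    rw [hCdef, hPdef]
    simp only []
    rw [Finset.sum_comm]
    exact Finset.sum_congr rfl fun u _ => U_row ℓ _
  have hgrow : ∀ ℓ : Fin m, (C ℓ 0 + P) + (C ℓ 1 + P) + (C ℓ 2 + P) = 0 := by
    intro ℓ
    have h1 := hCrow ℓ
    rw [Fin.sum_univ_three] at h1
    linear_combination h1 + 2 * zz P
  set a' : Fin m → Fin 4 := fun ℓ =>
    (exists_adjust (fun t => C ℓ t + P) (hgrow ℓ) (a ℓ.succ)).choose with ha'def
  have ha' : ∀ ℓ t, h t (a' ℓ) = h t (a ℓ.succ) + (C ℓ t + P) := by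
    intro ℓ
    exact (exists_adjust (fun t => C ℓ t + P) (hgrow ℓ) (a ℓ.succ)).choose_spec
  obtain ⟨σ', hσ'F, xr, hxr1, hxr2⟩ := IH (sl u₀ F) (fun τ' => pins (Fin.cons u₀ τ'))
    a' (fun ℓ => ε ℓ.succ + P) hbig
  set x : Dg (m+1) → ZMod 2 := fun τ => if τ 0 = u₀ then xr (Fin.tail τ) else outv τ with hxdef
  have hslice_u₀ : slice u₀ x = xr := by
    funext τ'
    simp [slice, hxdef, Fin.cons_zero, Fin.tail_cons]
  have hslice_ne : ∀ u, u ≠ u₀ → slice u x = slice u outv := by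
    intro u hu
    funext τ'
    simp [slice, hxdef, Fin.cons_zero, hu]
  refine ⟨Fin.cons u₀ σ', mem_sl.mp hσ'F, x, ?_, ?_⟩
  · intro τ hτ
    by_cases h0 : τ 0 = u₀
    · have hts : Fin.cons u₀ (Fin.tail τ) = τ := by rw [← h0]; exact Fin.cons_self_tail τ
      have : Fin.tail τ ∉ sl u₀ F := fun hh => hτ (hts ▸ mem_sl.mp hh)
      simp only [hxdef]
      rw [if_pos h0, hxr1 _ this, hts]
    · simp only [hxdef]
      rw [if_neg h0, houtdef]
      simp only []
      rw [if_neg hτ]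
  · intro ℓ t
    induction ℓ using Fin.cases with
    | zero =>
      intro hne0
      rw [Fin.cons_zero] at hne0
      rw [U_zero, hslice_ne t hne0, hovpar t hne0]
      rfl
    | succ ℓ =>
      intro hnes
      rw [Fin.cons_succ] at hnes
      rw [U_succ, ← Finset.add_sum_erase _ _ (Finset.mem_univ u₀), hslice_u₀,
        hxr2 ℓ t hnes]
      have e2 : ∑ u ∈ Finset.univ.erase u₀, U ℓ t (slice u x)
          = ∑ u ∈ Finset.univ.erase u₀, U ℓ t (slice u outv) := by
        apply Finset.sum_congr rfl
        intro u hu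
        rw [hslice_ne u (Finset.mem_erase.mp hu).1]
      have e3 : ∑ u ∈ Finset.univ.erase u₀, U ℓ t (slice u outv) = C ℓ t := rfl
      rw [e2, e3, ha' ℓ t, Fin.cons_succ]
      linear_combination zz P + zz (C ℓ t)

lemma mainL : ∀ (m : ℕ) (F : Finset (Dg m)) (pins : Dg m → ZMod 2)
    (a : Fin m → Fin 4) (ε : Fin m → ZMod 2), 3^m < 3*F.card →
    ∃ σ ∈ F, ∃ x : Dg m → ZMod 2, (∀ τ ∉ F, x τ = pins τ) ∧
      ∀ ℓ t, t ≠ σ ℓ → U ℓ t x = h t (a ℓ) + offs (σ ℓ) t + ε ℓ := by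
  intro m
  induction m with
  | zero =>
    intro F pins a ε hF
    obtain ⟨σ, hσ⟩ : F.Nonempty := Finset.card_pos.mp (by omega)
    exact ⟨σ, hσ, pins, fun τ _ => rfl, fun ℓ => ℓ.elim0⟩
  | succ m IH =>
    intro F pins a ε hF
    have hp : (3:ℕ)^(m+1) = 3*3^m := by ring
    by_cases hall : ∀ u : Fin 3, (sl u F).Nonempty
    · obtain ⟨us, hus⟩ := exists_big_slab F (3^m) (by omega)
      exact auxrec m IH F pins a ε us hus (fun t _ => Or.inl (hall t))
    · push_neg at hall
      obtain ⟨v, hv0⟩ := hall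
      set β : ZMod 2 := ∑ τ' : Dg m, pins (Fin.cons v τ') with hβ
      set ρ : ZMod 2 := β + h v (a 0) + ε 0 with hρ
      set u₀ : Fin 3 := if ρ = 1 then v + 2 else v + 1 with hu₀
      have hu₀ne : u₀ ≠ v := by
        rw [hu₀]; split
        · exact (fin3_facts v).2.1
        · exact (fin3_facts v).1
      have hmatch : β = h v (a 0) + offs u₀ v + ε 0 := by
        rw [hu₀]
        by_cases hρ1 : ρ = 1
        · rw [if_pos hρ1, offs_vp2]
          have e : β + h v (a 0) + ε 0 = 1 := by rw [← hρ]; exact hρ1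
          linear_combination e - zz (h v (a 0)) - zz (ε 0)
        · rw [if_neg hρ1, offs_vp1]
          have e : β + h v (a 0) + ε 0 = 0 := by rw [← hρ]; exact zmod2_cases ρ hρ1
          linear_combination e - zz (h v (a 0)) - zz (ε 0)
      by_cases hbig : 3^m < 3*(sl u₀ F).card
      · -- E1: recurse into slab u₀
        apply auxrec m IH F pins a ε u₀ hbig
        intro t ht
        by_cases htv : t = v
        · subst htv
          exact Or.inr ⟨hv0, hmatch⟩
        · left
          by_contra hemp
          rw [Finset.not_nonempty_iff_eq_empty] at hemp
          have hdc : F.card = (sl u₀ F).card + ∑ u ∈ Finset.univ.erase u₀, (sl u F).card := by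
            rw [card_sum F]
            exact (Finset.add_sum_erase Finset.univ (fun u => (sl u F).card)
              (Finset.mem_univ u₀)).symm
          have hz : ∑ u ∈ Finset.univ.erase u₀, (sl u F).card = 0 := by
            apply Finset.sum_eq_zero
            intro u hu
            have hune := (Finset.mem_erase.mp hu).1
            rcases fin3_cases_ne t u₀ v u ht hu₀ne htv hune with h1 | h1
            · rw [h1, hemp, Finset.card_empty]
            · rw [h1, hv0, Finset.card_empty]
          have := card_sl_le u₀ F
          omega
      · -- E2
        push_neg at hbig
        set u₁ : Fin 3 := if u₀ = v + 1 then v + 2 else v + 1 with hu₁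
        have hu₁v : u₁ ≠ v := by
          rw [hu₁]; split
          · exact (fin3_facts v).2.1
          · exact (fin3_facts v).1
        have hu₁u₀ : u₁ ≠ u₀ := by
          rw [hu₁]; split
          · next hcase => rw [hcase]; exact (fin3_facts v).2.2.1
          · next hcase => exact fun hh => hcase hh.symm
        have hsum : F.card = (sl u₀ F).card + (sl u₁ F).card := by
          rw [card_sum F,
            ← Finset.add_sum_erase Finset.univ (fun u => (sl u F).card) (Finset.mem_univ u₀),
            ← Finset.add_sum_erase _ (fun u => (sl u F).card)
              (Finset.mem_erase.mpr ⟨hu₁u₀, Finset.mem_univ u₁⟩)]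
          have hz : ∑ u ∈ (Finset.univ.erase u₀).erase u₁, (sl u F).card = 0 := by
            apply Finset.sum_eq_zero
            intro u hu
            obtain ⟨hu1, hu2⟩ := Finset.mem_erase.mp hu
            have hu3 := (Finset.mem_erase.mp hu2).1
            rcases fin3_cases_ne v u₀ u₁ u hu₀ne.symm hu₁u₀.symm hu₁v.symm hu3 with h1 | h1
            · rw [h1, hv0, Finset.card_empty]
            · exact absurd h1 hu1
          rw [hz, add_zero]
        have hbig2 : 2*3^m < 3*(sl u₁ F).card := by omega
        have hne0 : (sl u₀ F).Nonempty := by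
          rw [← Finset.card_pos]
          have := card_sl_le u₁ F
          omega
        obtain ⟨σ', hσ'⟩ := hne0
        set outv : Dg (m+1) → ZMod 2 := fun τ => if τ ∈ F then 0 else pins τ with houtdef
        have hovs : ∀ u, slice u outv
            = fun τ' => if τ' ∈ sl u F then 0 else pins (Fin.cons u τ') := by
          intro u
          funext τ'
          simp only [slice, houtdef]
          by_cases hm : Fin.cons u τ' ∈ F
          · simp [hm, mem_sl.mpr hm]
          · have : τ' ∉ sl u F := fun hh => hm (mem_sl.mp hh)
            simp [hm, this]
        set C : Fin m → Fin 3 → ZMod 2 :=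
          fun ℓ t => ∑ u ∈ Finset.univ.erase u₁, U ℓ t (slice u outv) with hCdef
        set S : ZMod 2 := h u₁ (a 0) + offs u₀ u₁ + ε 0 with hSdef
        set row : Fin m → Fin 3 → ZMod 2 :=
          fun ℓ t => h t (a ℓ.succ) + offs (σ' ℓ) t + ε ℓ.succ + C ℓ t with hrowdef
        set Dm : Fin m → Fin 3 → ZMod 2 :=
          fun ℓ t => row ℓ t + (if t = σ' ℓ then S + (row ℓ 0 + row ℓ 1 + row ℓ 2) else 0)
          with hDmdef
        have hrows : ∀ ℓ, ∑ t, Dm ℓ t = S := by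
          intro ℓ
          rw [hDmdef]
          simp only []
          rw [Finset.sum_add_distrib, Finset.sum_ite_eq' Finset.univ (σ' ℓ)
            (fun _ => S + (row ℓ 0 + row ℓ 1 + row ℓ 2))]
          rw [if_pos (Finset.mem_univ _), Fin.sum_univ_three]
          linear_combination zz (row ℓ 0 + row ℓ 1 + row ℓ 2)
        obtain ⟨xr, hxr1, hxr2, hxr3⟩ := L2 m (sl u₁ F) (fun τ' => pins (Fin.cons u₁ τ'))
          Dm S hrows hbig2
        set x : Dg (m+1) → ZMod 2 :=
          fun τ => if τ 0 = u₁ then xr (Fin.tail τ) else outv τ with hxdef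
        have hslice_u₁ : slice u₁ x = xr := by
          funext τ'
          simp [slice, hxdef, Fin.cons_zero, Fin.tail_cons]
        have hslice_ne : ∀ u, u ≠ u₁ → slice u x = slice u outv := by
          intro u hu
          funext τ'
          simp [slice, hxdef, Fin.cons_zero, hu]
        refine ⟨Fin.cons u₀ σ', mem_sl.mp hσ', x, ?_, ?_⟩
        · intro τ hτ
          by_cases h0 : τ 0 = u₁
          · have hts : Fin.cons u₁ (Fin.tail τ) = τ := by rw [← h0]; exact Fin.cons_self_tail τ
            have : Fin.tail τ ∉ sl u₁ F := fun hh => hτ (hts ▸ mem_sl.mp hh)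
            simp only [hxdef]
            rw [if_pos h0, hxr1 _ this, hts]
          · simp only [hxdef]
            rw [if_neg h0, houtdef]
            simp only []
            rw [if_neg hτ]
        · intro ℓ t
          induction ℓ using Fin.cases with
          | zero =>
            intro hne0'
            rw [Fin.cons_zero] at hne0'
            rcases fin3_cases_ne v u₀ u₁ t hu₀ne.symm hu₁u₀.symm hu₁v.symm hne0' with h1 | h1
            · subst h1
              rw [U_zero, hslice_ne t hu₁v.symm, hovs t]
              have he : (fun τ' => if τ' ∈ sl t F then 0 else pins (Fin.cons t τ'))
                  = fun τ' => pins (Fin.cons t τ') := by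
                funext τ'
                rw [hv0]
                simp
              rw [he, Fin.cons_zero]
              exact hmatch
            · subst h1
              rw [U_zero, hslice_u₁, hxr3, Fin.cons_zero]
          | succ ℓ =>
            intro hnes
            rw [Fin.cons_succ] at hnes
            rw [U_succ, ← Finset.add_sum_erase _ _ (Finset.mem_univ u₁), hslice_u₁,
              hxr2 ℓ t]
            have e2 : ∑ u ∈ Finset.univ.erase u₁, U ℓ t (slice u x)
                = ∑ u ∈ Finset.univ.erase u₁, U ℓ t (slice u outv) := by
              apply Finset.sum_congr rfl
              intro u hu
              rw [hslice_ne u (Finset.mem_erase.mp hu).1]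
            have e3 : ∑ u ∈ Finset.univ.erase u₁, U ℓ t (slice u outv) = C ℓ t := rfl
            have e4 : Dm ℓ t = row ℓ t + (if t = σ' ℓ then S + (row ℓ 0 + row ℓ 1 + row ℓ 2)
                else 0) := rfl
            have e5 : row ℓ t = h t (a ℓ.succ) + offs (σ' ℓ) t + ε ℓ.succ + C ℓ t := rfl
            rw [e2, e3, e4, if_neg hnes, add_zero, e5, Fin.cons_succ]
            linear_combination zz (C ℓ t)

lemma h_c3 : ∀ (s : Fin 3) (p q : ZMod 2), h (s+1) (c3 s p q) = p ∧ h (s+2) (c3 s p q) = q := by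
  decide

def ofB {m : ℕ} (x : Dg m → Bool) : Dg m → ZMod 2 := fun τ => if x τ then 1 else 0

def colorOf {m : ℕ} (x : Dg m → Bool) (σ : Dg m) : Fin m → Fin 4 :=
  fun ℓ => c3 (σ ℓ) (U ℓ (σ ℓ + 1) (ofB x) + offs (σ ℓ) (σ ℓ + 1))
               (U ℓ (σ ℓ + 2) (ofB x) + offs (σ ℓ) (σ ℓ + 2))

lemma colorOf_eq_of_U {m : ℕ} (x : Dg m → Bool) (σ : Dg m) (a : Fin m → Fin 4)
    (hU : ∀ ℓ t, t ≠ σ ℓ → U ℓ t (ofB x) = h t (a ℓ) + offs (σ ℓ) t) :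
    colorOf x σ = a := by
  funext ℓ
  rw [colorOf, hU ℓ (σ ℓ + 1) (fin3_facts (σ ℓ)).1, hU ℓ (σ ℓ + 2) (fin3_facts (σ ℓ)).2.1,
    add_assoc, zz, add_zero, add_assoc, zz, add_zero, c3_spec]

lemma U_eq_of_agree {m : ℕ} {x y : Dg m → ZMod 2} {γ : Dg m}
    (hagree : ∀ τ, τ ≠ γ → x τ = y τ) (ℓ : Fin m) (t : Fin 3) (ht : γ ℓ ≠ t) :
    U ℓ t x = U ℓ t y := by
  apply Finset.sum_congr rfl
  intro τ _
  by_cases hτ : τ = γ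
  · subst hτ
    rw [if_neg ht, if_neg ht]
  · rw [hagree τ hτ]

lemma colorOf_flip {m : ℕ} (x : Dg m → Bool) (σ : Dg m) (b : Bool) :
    colorOf (Function.update x σ b) σ = colorOf x σ := by
  funext ℓ
  rw [colorOf, colorOf]
  have hagree : ∀ τ, τ ≠ σ → ofB (Function.update x σ b) τ = ofB x τ := by
    intro τ hτ
    rw [ofB, ofB]
    rw [Function.update_of_ne hτ]
  rw [U_eq_of_agree hagree ℓ (σ ℓ + 1) (Ne.symm (fin3_facts (σ ℓ)).1),
    U_eq_of_agree hagree ℓ (σ ℓ + 2) (Ne.symm (fin3_facts (σ ℓ)).2.1)]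

lemma colorOf_proper {m : ℕ} (x : Dg m → Bool) (σ σ' : Dg m) (hσ : σ ≠ σ') :
    colorOf x σ ≠ colorOf x σ' := by
  obtain ⟨ℓ, hℓ⟩ := Function.ne_iff.mp hσ
  intro heq
  exact proper_core (σ ℓ) (σ' ℓ) hℓ (fun t => U ℓ t (ofB x)) (congrFun heq ℓ)

def zval {m : ℕ} (c c' : Fin m → Fin 4) (ℓ : Fin m) (t : Fin 3) : ZMod 2 :=
  h t (c ℓ) + h t (c' ℓ)

def zfun {m : ℕ} (σ : Dg m) (c c' : Fin m → Fin 4) : Dg m → ZMod 2 :=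
  fun τ => ∑ ℓ : Fin m, ∑ t : Fin 3,
    if τ = Function.update σ ℓ t ∧ t ≠ σ ℓ then zval c c' ℓ t else 0

lemma zfun_symm {m : ℕ} (σ : Dg m) (c c' : Fin m → Fin 4) :
    zfun σ c c' = zfun σ c' c := by
  funext τ
  rw [zfun, zfun]
  apply Finset.sum_congr rfl; intro ℓ _
  apply Finset.sum_congr rfl; intro t _
  rw [zval, zval, add_comm]

lemma zfun_self {m : ℕ} (σ : Dg m) (c c' : Fin m → Fin 4) :
    zfun σ c c' σ = 0 := by
  rw [zfun]
  apply Finset.sum_eq_zero; intro ℓ _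
  apply Finset.sum_eq_zero; intro t _
  rw [if_neg]
  rintro ⟨heq, hne⟩
  exact hne (by rw [heq, Function.update_self])

lemma U_zfun {m : ℕ} (σ : Dg m) (c c' : Fin m → Fin 4) (ℓ₀ : Fin m) (t₀ : Fin 3)
    (ht : t₀ ≠ σ ℓ₀) : U ℓ₀ t₀ (zfun σ c c') = zval c c' ℓ₀ t₀ := by
  rw [U]
  have step1 : ∀ τ : Dg m, (if τ ℓ₀ = t₀ then zfun σ c c' τ else 0)
      = ∑ ℓ : Fin m, ∑ t : Fin 3,
        (if τ = Function.update σ ℓ t ∧ (t ≠ σ ℓ ∧ Function.update σ ℓ t ℓ₀ = t₀)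
          then zval c c' ℓ t else 0) := by
    intro τ
    by_cases hτ : τ ℓ₀ = t₀
    · rw [if_pos hτ, zfun]
      apply Finset.sum_congr rfl; intro ℓ _
      apply Finset.sum_congr rfl; intro t _
      by_cases he : τ = Function.update σ ℓ t
      · subst he
        simp [hτ]
      · rw [if_neg (fun hh => he hh.1), if_neg (fun hh => he hh.1)]
    · rw [if_neg hτ]
      symm
      apply Finset.sum_eq_zero; intro ℓ _
      apply Finset.sum_eq_zero; intro t _
      rw [if_neg]
      rintro ⟨heq, _, hup⟩
      exact hτ (by rw [heq]; exact hup)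
  rw [Finset.sum_congr rfl (fun τ _ => step1 τ)]
  rw [Finset.sum_comm]
  have step2 : ∀ ℓ : Fin m, ∑ τ : Dg m, ∑ t : Fin 3,
      (if τ = Function.update σ ℓ t ∧ (t ≠ σ ℓ ∧ Function.update σ ℓ t ℓ₀ = t₀)
        then zval c c' ℓ t else 0)
      = ∑ t : Fin 3, (if t ≠ σ ℓ ∧ Function.update σ ℓ t ℓ₀ = t₀ then zval c c' ℓ t else 0) := by
    intro ℓ
    rw [Finset.sum_comm]
    apply Finset.sum_congr rfl; intro t _
    by_cases hQ : t ≠ σ ℓ ∧ Function.update σ ℓ t ℓ₀ = t₀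
    · rw [if_pos hQ]
      rw [Finset.sum_eq_single_of_mem (Function.update σ ℓ t) (Finset.mem_univ _)]
      · rw [if_pos ⟨rfl, hQ⟩]
      · intro τ _ hτ
        rw [if_neg (fun hh => hτ hh.1)]
    · rw [if_neg hQ]
      apply Finset.sum_eq_zero; intro τ _
      rw [if_neg (fun hh => hQ hh.2)]
  rw [Finset.sum_congr rfl (fun ℓ _ => step2 ℓ)]
  have step3 : ∀ ℓ : Fin m, ∑ t : Fin 3,
      (if t ≠ σ ℓ ∧ Function.update σ ℓ t ℓ₀ = t₀ then zval c c' ℓ t else 0)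
      = if ℓ = ℓ₀ then zval c c' ℓ₀ t₀ else 0 := by
    intro ℓ
    by_cases hℓ : ℓ = ℓ₀
    · subst hℓ
      rw [if_pos rfl]
      rw [Finset.sum_eq_single_of_mem t₀ (Finset.mem_univ _)]
      · rw [if_pos ⟨ht, Function.update_self _ _ _⟩]
      · intro t _ htne
        rw [if_neg]
        rintro ⟨_, hup⟩
        rw [Function.update_self] at hup
        exact htne hup
    · rw [if_neg hℓ]
      apply Finset.sum_eq_zero; intro t _
      rw [if_neg]
      rintro ⟨_, hup⟩
      rw [Function.update_of_ne (fun hh => hℓ hh.symm)] at hup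
      exact ht hup.symm
  rw [Finset.sum_congr rfl (fun ℓ _ => step3 ℓ)]
  rw [Finset.sum_ite_eq' Finset.univ ℓ₀ (fun _ => zval c c' ℓ₀ t₀)]
  rw [if_pos (Finset.mem_univ _)]

lemma U_add {m : ℕ} (ℓ : Fin m) (t : Fin 3) (f g : Dg m → ZMod 2) :
    U ℓ t (fun τ => f τ + g τ) = U ℓ t f + U ℓ t g := by
  rw [U, U, U, ← Finset.sum_add_distrib]
  apply Finset.sum_congr rfl; intro τ _
  by_cases hτ : τ ℓ = t <;> simp [hτ]

lemma colorOf_xor {m : ℕ} (x : Dg m → Bool) (σ : Dg m) (c c' : Fin m → Fin 4)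
    (hc : colorOf x σ = c) :
    colorOf (fun τ => xor (x τ) (zfun σ c c' τ = 1)) σ = c' := by
  have hofB : ofB (fun τ => xor (x τ) (zfun σ c c' τ = 1))
      = fun τ => ofB x τ + zfun σ c c' τ := by
    funext τ
    rw [ofB, ofB]
    have : ∀ (a : Bool) (z : ZMod 2),
        (if (xor a (z = 1)) then (1:ZMod 2) else 0) = (if a then 1 else 0) + z := by decide
    exact this (x τ) (zfun σ c c' τ)
  funext ℓ
  rw [colorOf]
  simp only [hofB]
  rw [U_add, U_add, U_zfun σ c c' ℓ (σ ℓ + 1) (fin3_facts (σ ℓ)).1,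
    U_zfun σ c c' ℓ (σ ℓ + 2) (fin3_facts (σ ℓ)).2.1]
  have h1 : h (σ ℓ + 1) (c ℓ) = U ℓ (σ ℓ + 1) (ofB x) + offs (σ ℓ) (σ ℓ + 1) := by
    rw [← hc]; exact (h_c3 (σ ℓ) _ _).1
  have h2 : h (σ ℓ + 2) (c ℓ) = U ℓ (σ ℓ + 2) (ofB x) + offs (σ ℓ) (σ ℓ + 2) := by
    rw [← hc]; exact (h_c3 (σ ℓ) _ _).2
  have e1 : U ℓ (σ ℓ + 1) (ofB x) + zval c c' ℓ (σ ℓ + 1) + offs (σ ℓ) (σ ℓ + 1)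
      = h (σ ℓ + 1) (c' ℓ) := by
    rw [zval, h1]
    linear_combination zz (U ℓ (σ ℓ + 1) (ofB x)) + zz (offs (σ ℓ) (σ ℓ + 1))
  have e2 : U ℓ (σ ℓ + 2) (ofB x) + zval c c' ℓ (σ ℓ + 2) + offs (σ ℓ) (σ ℓ + 2)
      = h (σ ℓ + 2) (c' ℓ) := by
    rw [zval, h2]
    linear_combination zz (U ℓ (σ ℓ + 2) (ofB x)) + zz (offs (σ ℓ) (σ ℓ + 2))
  rw [e1, e2, c3_spec]

-- ============ Boolean-cube world ============

def eqD (m : ℕ) : Dg m ≃ Fin (3^m) := finFunctionFinEquiv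
def eqC (m : ℕ) : (Fin m → Fin 4) ≃ Fin (4^m) := finFunctionFinEquiv

abbrev Vtx (m : ℕ) := Fin (3^m) → Bool

def flp {m : ℕ} (x : Vtx m) (i : Fin (3^m)) : Vtx m := Function.update x i (!(x i))

def colB {m : ℕ} (x : Vtx m) (i : Fin (3^m)) : Fin m → Fin 4 :=
  colorOf (fun τ => x (eqD m τ)) ((eqD m).symm i)

def MM (m : ℕ) (c : Fin m → Fin 4) : Set (Set (Vtx m)) :=
  {e | ∃ x i, e = {x, flp x i} ∧ colB x i = c}

lemma flp_self {m : ℕ} (x : Vtx m) (i : Fin (3^m)) : flp x i i = !(x i) :=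
  Function.update_self _ _ _

lemma flp_ne_apply {m : ℕ} (x : Vtx m) {i j : Fin (3^m)} (hij : j ≠ i) : flp x i j = x j :=
  Function.update_of_ne hij _ _

lemma flp_ne {m : ℕ} (x : Vtx m) (i : Fin (3^m)) : flp x i ≠ x := by
  intro hh
  have := congrFun hh i
  rw [flp_self] at this
  exact Bool.not_ne_self _ this

lemma flp_flp {m : ℕ} (x : Vtx m) (i : Fin (3^m)) : flp (flp x i) i = x := by
  funext j
  by_cases hj : j = i
  · subst hj
    rw [flp_self, flp_self, Bool.not_not]
  · rw [flp_ne_apply _ hj, flp_ne_apply _ hj]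

lemma flp_inj_dir {m : ℕ} (x : Vtx m) (i j : Fin (3^m)) (hh : flp x i = flp x j) : i = j := by
  by_contra hij
  have := congrFun hh i
  rw [flp_self, flp_ne_apply _ (fun h => hij h)] at this
  exact Bool.not_ne_self _ this

lemma qadj_flp {m : ℕ} (x : Vtx m) (i : Fin (3^m)) : QAdj x (flp x i) := by
  unfold QAdj
  have : Finset.univ.filter (fun j => x j ≠ flp x i j) = {i} := by
    ext j
    simp only [Finset.mem_filter, Finset.mem_univ, true_and, Finset.mem_singleton]
    constructor
    · intro hne
      by_contra hji
      exact hne (flp_ne_apply _ hji).symm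
    · intro hji
      subst hji
      rw [flp_self]
      exact fun hh => Bool.not_ne_self _ hh.symm
  rw [this, Finset.card_singleton]

lemma qadj_exists {m : ℕ} {x y : Vtx m} (hadj : QAdj x y) : ∃ i, y = flp x i := by
  unfold QAdj at hadj
  obtain ⟨i, hi⟩ := Finset.card_eq_one.mp hadj
  refine ⟨i, funext fun j => ?_⟩
  by_cases hj : j = i
  · subst hj
    have : j ∈ Finset.univ.filter (fun j' => x j' ≠ y j') := by rw [hi]; exact Finset.mem_singleton_self j
    have hne : x j ≠ y j := (Finset.mem_filter.mp this).2
    rw [flp_self]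
    revert hne
    cases x j <;> cases y j <;> decide
  · have : j ∉ Finset.univ.filter (fun j' => x j' ≠ y j') := by
      rw [hi]; exact fun hh => hj (Finset.mem_singleton.mp hh)
    have heq : ¬ (x j ≠ y j) := fun hh => this (Finset.mem_filter.mpr ⟨Finset.mem_univ _, hh⟩)
    rw [flp_ne_apply _ hj]
    exact not_not.mp (fun hh => heq (fun h2 => hh h2.symm))

lemma colB_flip {m : ℕ} (x : Vtx m) (i : Fin (3^m)) : colB (flp x i) i = colB x i := by
  unfold colB
  have he : (fun τ => flp x i (eqD m τ))
      = Function.update (fun τ => x (eqD m τ)) ((eqD m).symm i) (!(x i)) := by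
    funext τ
    by_cases hτ : τ = (eqD m).symm i
    · subst hτ
      rw [Function.update_self, Equiv.apply_symm_apply, flp_self]
    · have : eqD m τ ≠ i := by
        intro hh
        exact hτ (by rw [← hh, Equiv.symm_apply_apply])
      rw [Function.update_of_ne hτ, flp_ne_apply _ this]
  rw [he, colorOf_flip]

lemma colB_inj_dir {m : ℕ} (x : Vtx m) (i j : Fin (3^m)) (hc : colB x i = colB x j) : i = j := by
  by_contra hij
  have hσ : (eqD m).symm i ≠ (eqD m).symm j := fun hh => hij ((eqD m).symm.injective hh)
  exact colorOf_proper _ _ _ hσ hc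

/-- any vertex of an edge can serve as its base representative -/
lemma edge_rebase {m : ℕ} (x v : Vtx m) (i : Fin (3^m)) (hv : v ∈ ({x, flp x i} : Set (Vtx m))) :
    ({x, flp x i} : Set (Vtx m)) = {v, flp v i} ∧ colB v i = colB x i := by
  rcases hv with hv | hv
  · subst hv; exact ⟨rfl, rfl⟩
  · simp only [Set.mem_singleton_iff] at hv
    subst hv
    constructor
    · rw [flp_flp, Set.pair_comm]
    · exact colB_flip x i

lemma mm_matching {m : ℕ} (c : Fin m → Fin 4) : IsMatching (3^m) (MM m c) := by
  constructor
  · rintro e ⟨x, i, rfl, _⟩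
    exact ⟨x, flp x i, qadj_flp x i, rfl⟩
  · rintro e ⟨x, i, rfl, hcx⟩ f ⟨y, j, rfl, hcy⟩ hef
    rw [Set.eq_empty_iff_forall_notMem]
    rintro v ⟨hve, hvf⟩
    obtain ⟨he, hce⟩ := edge_rebase x v i hve
    obtain ⟨hf, hcf⟩ := edge_rebase y v j hvf
    have : colB v i = colB v j := by rw [hce, hcf, hcx, hcy]
    have hij : i = j := colB_inj_dir v i j this
    subst hij
    exact hef (by rw [he, hf])

lemma mm_disjoint {m : ℕ} (c c' : Fin m → Fin 4) (hcc : c ≠ c') : MM m c ∩ MM m c' = ∅ := by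
  rw [Set.eq_empty_iff_forall_notMem]
  rintro e ⟨⟨x, i, rfl, hcx⟩, ⟨y, j, hey, hcy⟩⟩
  have hy : y ∈ ({x, flp x i} : Set (Vtx m)) := by rw [hey]; exact Or.inl rfl
  obtain ⟨he, hce⟩ := edge_rebase x y i hy
  have hfy : flp y j ∈ ({y, flp y i} : Set (Vtx m)) := by
    rw [← he, hey]; exact Or.inr rfl
  rcases hfy with hfy | hfy
  · exact flp_ne y j hfy
  · simp only [Set.mem_singleton_iff] at hfy
    have hij : j = i := flp_inj_dir y j i hfy
    subst hij
    exact hcc (by rw [← hcx, ← hce, hcy])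

lemma zmod_decode : ∀ z : ZMod 2, (if (decide (z = 1) : Bool) then (1:ZMod 2) else 0) = z := by
  decide

lemma bool_decode : ∀ bb : Bool, (decide ((if bb then (1:ZMod 2) else 0) = 1)) = bb := by decide

lemma mm_blocks (d : ℕ) (c : Fin (d+1) → Fin 4) :
    Blocks (3^(d+1)) (3^d + 1) (MM (d+1) c) := by
  intro S hS
  obtain ⟨Ffix, b, hcard, hSdef⟩ := hS
  have hpow : (3:ℕ)^(d+1) = 3*3^d := by ring
  set free : Finset (Fin (3^(d+1))) := Ffixᶜ with hfree
  have hfreecard : free.card = 3^d + 1 := by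
    rw [hfree, Finset.card_compl, Fintype.card_fin, hcard, hpow]
    have h1 : (1:ℕ) ≤ 3^d := Nat.one_le_pow d 3 (by norm_num)
    generalize hA : (3:ℕ)^d = A at h1 ⊢
    omega
  set Fdig : Finset (Dg (d+1)) := free.map (eqD (d+1)).symm.toEmbedding with hFdig
  have hmem : ∀ τ : Dg (d+1), τ ∈ Fdig ↔ eqD (d+1) τ ∈ free := by
    intro τ
    rw [hFdig, Finset.mem_map]
    constructor
    · rintro ⟨i, hi, rfl⟩
      rw [Equiv.toEmbedding_apply, Equiv.apply_symm_apply]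
      exact hi
    · intro hi
      exact ⟨eqD (d+1) τ, hi, by rw [Equiv.toEmbedding_apply, Equiv.symm_apply_apply]⟩
  have hcard2 : 3^(d+1) < 3 * Fdig.card := by
    rw [hFdig, Finset.card_map, hfreecard, hpow]
    generalize hA : (3:ℕ)^d = A
    omega
  obtain ⟨σ, hσF, xd, hx1, hx2⟩ := mainL (d+1) Fdig (fun τ => if b (eqD (d+1) τ) then 1 else 0)
    c (fun _ => 0) hcard2
  set istar : Fin (3^(d+1)) := eqD (d+1) σ with histar
  set xB : Vtx (d+1) := fun i => if i = istar then false
    else decide (xd ((eqD (d+1)).symm i) = 1) with hxB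
  have hσeq : (eqD (d+1)).symm istar = σ := Equiv.symm_apply_apply _ _
  have hib : istar ∈ free := (hmem σ).mp hσF
  have hcol : colB xB istar = c := by
    unfold colB
    rw [hσeq]
    apply colorOf_eq_of_U
    intro ℓ t ht
    have hagree : ∀ τ, τ ≠ σ → ofB (fun τ' => xB (eqD (d+1) τ')) τ = xd τ := by
      intro τ hτ
      have h1 : eqD (d+1) τ ≠ istar := by
        intro hh
        exact hτ (by rw [← Equiv.symm_apply_apply (eqD (d+1)) τ, hh, hσeq])
      rw [ofB]
      simp only [hxB]
      rw [if_neg h1, Equiv.symm_apply_apply]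
      exact zmod_decode (xd τ)
    rw [U_eq_of_agree hagree ℓ t (Ne.symm ht), hx2 ℓ t ht, add_zero]
  refine ⟨{xB, flp xB istar}, ⟨xB, istar, rfl, hcol⟩, ?_⟩
  rw [hSdef]
  intro v hv
  simp only [Set.mem_setOf_eq]
  intro idx hidx
  have hidxf : idx ∉ free := by
    intro hh
    rw [hfree] at hh
    exact (Finset.mem_compl.mp hh) hidx
  have hidxs : idx ≠ istar := fun hh => hidxf (hh ▸ hib)
  have hvidx : v idx = xB idx := by
    rcases hv with hv | hv
    · rw [hv]
    · simp only [Set.mem_singleton_iff] at hv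
      rw [hv, flp_ne_apply _ hidxs]
  have hdig : (eqD (d+1)).symm idx ∉ Fdig := by
    intro hh
    have := (hmem _).mp hh
    rw [Equiv.apply_symm_apply] at this
    exact hidxf this
  rw [hvidx]
  simp only [hxB]
  rw [if_neg hidxs, hx1 _ hdig]
  rw [Equiv.apply_symm_apply]
  exact bool_decode (b idx)

def botSet (m : ℕ) (c : Fin m → Fin 4) : Set (Vtx m × Fin (3^m)) :=
  {p | p.1 p.2 = false ∧ colB p.1 p.2 = c}

lemma ncard_mm (m : ℕ) (c : Fin m → Fin 4) : (MM m c).ncard = (botSet m c).ncard := by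
  have himg : (fun p : Vtx m × Fin (3^m) => ({p.1, flp p.1 p.2} : Set (Vtx m))) '' (botSet m c)
      = MM m c := by
    ext e
    constructor
    · rintro ⟨⟨x, i⟩, ⟨hb, hcol⟩, rfl⟩
      exact ⟨x, i, rfl, hcol⟩
    · rintro ⟨x, i, rfl, hcol⟩
      by_cases hx : x i = false
      · exact ⟨(x, i), ⟨hx, hcol⟩, rfl⟩
      · refine ⟨(flp x i, i), ⟨?_, ?_⟩, ?_⟩
        · show flp x i i = false
          have hxt : x i = true := by revert hx; cases x i <;> simp
          rw [flp_self, hxt]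
          rfl
        · rw [colB_flip]
          exact hcol
        · simp only []
          rw [flp_flp, Set.pair_comm]
  rw [← himg]
  rw [Set.ncard_image_of_injOn]
  rintro ⟨x, i⟩ ⟨hbx, _⟩ ⟨y, j⟩ ⟨hby, _⟩ heq
  simp only [] at heq hbx hby
  have hx_mem : x ∈ ({y, flp y j} : Set (Vtx m)) := by rw [← heq]; exact Or.inl rfl
  rcases hx_mem with hxy | hxy
  · subst hxy
    have hfl : flp x i ∈ ({x, flp x j} : Set (Vtx m)) := by rw [← heq]; exact Or.inr rfl
    rcases hfl with hfl | hfl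
    · exact absurd hfl (flp_ne x i)
    · simp only [Set.mem_singleton_iff] at hfl
      rw [Prod.mk.injEq]
      exact ⟨rfl, flp_inj_dir x i j hfl⟩
  · exfalso
    simp only [Set.mem_singleton_iff] at hxy
    have hxj : x j = true := by
      rw [hxy, flp_self, hby]
      rfl
    have hy_mem : y ∈ ({x, flp x i} : Set (Vtx m)) := by rw [heq]; exact Or.inl rfl
    have hyx : y ≠ x := by
      intro hh
      rw [hh] at hxy
      exact flp_ne x j hxy.symm
    rcases hy_mem with h1 | h1
    · exact hyx h1
    · simp only [Set.mem_singleton_iff] at h1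
      by_cases hij : i = j
      · subst hij
        rw [hbx] at hxj
        exact Bool.false_ne_true hxj
      · have : y j = x j := by
          rw [h1, flp_ne_apply _ (fun hh => hij hh.symm)]
        rw [hby, hxj] at this
        exact Bool.false_ne_true this

lemma xor_cancel : ∀ a bb : Bool, xor (xor a bb) bb = a := by decide

lemma bot_card_eq (m : ℕ) (c c' : Fin m → Fin 4) :
    (botSet m c).ncard = (botSet m c').ncard := by
  set Ψ : (Fin m → Fin 4) → (Fin m → Fin 4) → Vtx m × Fin (3^m) → Vtx m × Fin (3^m) :=
    fun u u' p =>
      (fun idx => xor (p.1 idx)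
        (decide (zfun ((eqD m).symm p.2) u u' ((eqD m).symm idx) = 1)), p.2) with hΨ
  have hinv : ∀ (u u' : Fin m → Fin 4) p, Ψ u' u (Ψ u u' p) = p := by
    intro u u' p
    simp only [hΨ]
    rw [Prod.mk.injEq]
    refine ⟨funext fun idx => ?_, rfl⟩
    rw [zfun_symm ((eqD m).symm p.2) u' u]
    exact xor_cancel _ _
  have hmaps : ∀ (u u' : Fin m → Fin 4) p, p ∈ botSet m u → Ψ u u' p ∈ botSet m u' := by
    rintro u u' ⟨x, i⟩ ⟨hb, hcol⟩
    have hb' : x i = false := hb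
    constructor
    · show (xor (x i) (decide (zfun ((eqD m).symm i) u u' ((eqD m).symm i) = 1))) = false
      rw [hb', zfun_self]
      decide
    · simp only [hΨ]
      unfold colB
      have he : (fun τ => (xor (x (eqD m τ))
            (decide (zfun ((eqD m).symm i) u u' ((eqD m).symm (eqD m τ)) = 1))))
          = fun τ => xor ((fun τ' => x (eqD m τ')) τ) (zfun ((eqD m).symm i) u u' τ = 1) := by
        funext τ
        rw [Equiv.symm_apply_apply]
      rw [he]
      exact colorOf_xor (fun τ' => x (eqD m τ')) ((eqD m).symm i) u u' hcol
  have himg : Ψ c c' '' botSet m c = botSet m c' := by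
    ext q
    constructor
    · rintro ⟨p, hp, rfl⟩
      exact hmaps c c' p hp
    · intro hq
      exact ⟨Ψ c' c q, hmaps c' c q hq, hinv c' c q⟩
  rw [← himg, Set.ncard_image_of_injOn]
  intro p _ q _ heq
  rw [← hinv c c' p, heq, hinv c c' q]

lemma mm_union (m : ℕ) :
    (⋃ j : Fin (4^m), MM m ((eqC m).symm j)) = {e | QEdge (3^m) e} := by
  ext e
  constructor
  · intro he
    obtain ⟨j, x, i, rfl, _⟩ := Set.mem_iUnion.mp he
    exact ⟨x, flp x i, qadj_flp x i, rfl⟩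
  · rintro ⟨x, y, hadj, rfl⟩
    obtain ⟨i, rfl⟩ := qadj_exists hadj
    exact Set.mem_iUnion.mpr ⟨eqC m (colB x i), x, i, rfl, by rw [Equiv.symm_apply_apply]⟩

end S14

theorem stmt_14 (d : ℕ) :
    ∃ M : Fin (4 ^ (d + 1)) → Set (Set (Fin (3 ^ (d + 1)) → Bool)),
      (∀ j, IsMatching (3 ^ (d + 1)) (M j)) ∧
      (∀ j, Blocks (3 ^ (d + 1)) (3 ^ d + 1) (M j)) ∧
      (∀ j j', j ≠ j' → M j ∩ M j' = ∅) ∧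
      (⋃ j, M j) = {e | QEdge (3 ^ (d + 1)) e} ∧
      (∀ j j', (M j).ncard = (M j').ncard) := by
  refine ⟨fun j => S14.MM (d+1) ((S14.eqC (d+1)).symm j), ?_, ?_, ?_, ?_, ?_⟩
  · intro j
    exact S14.mm_matching _
  · intro j
    exact S14.mm_blocks d _
  · intro j j' hjj
    exact S14.mm_disjoint _ _ (fun hh => hjj ((S14.eqC (d+1)).symm.injective hh))
  · exact S14.mm_union (d+1)
  · intro j j'
    rw [S14.ncard_mm, S14.ncard_mm, S14.bot_card_eq (d+1) _ ((S14.eqC (d+1)).symm j')]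
end

section
/- There exists a matching of Q_6 of 24 edges, namely the union of the four 'cyclic orbits' ⟨(v,0,1,0,0,0)⟩, ⟨(v,1,0,1,1,1)⟩, ⟨(v,0,1,1,0,0)⟩, ⟨(v,1,0,0,1,1)⟩ (where ⟨e⟩ denotes the set of 6 cyclic coordinate-shifts of the edge e), such that every 3-dimensional subcube of Q_6 contains an edge of this matching. -/
def cyc (e : Set (Fin 6 → Bool)) : Set (Set (Fin 6 → Bool)) :=
  {f | ∃ j : Fin 6, f = (fun x : Fin 6 → Bool => fun i => x (i + j)) '' e}

def M6 : Set (Set (Fin 6 → Bool)) :=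
  cyc {![false,false,true,false,false,false], ![true,false,true,false,false,false]} ∪
  cyc {![false,true,false,true,true,true], ![true,true,false,true,true,true]} ∪
  cyc {![false,false,true,true,false,false], ![true,false,true,true,false,false]} ∪
  cyc {![false,true,false,false,true,true], ![true,true,false,false,true,true]}

def sh (j : Fin 6) (x : Fin 6 → Bool) : Fin 6 → Bool := fun i => x (i + j)

def vA : Fin 4 → (Fin 6 → Bool) :=
  ![![false,false,true,false,false,false], ![false,true,false,true,true,true],
    ![false,false,true,true,false,false], ![false,true,false,false,true,true]]

def vB : Fin 4 → (Fin 6 → Bool) :=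
  ![![true,false,true,false,false,false], ![true,true,false,true,true,true],
    ![true,false,true,true,false,false], ![true,true,false,false,true,true]]

def g (p : Fin 6 × Fin 4) : Set (Fin 6 → Bool) := {sh p.1 (vA p.2), sh p.1 (vB p.2)}

lemma hadj : ∀ p : Fin 6 × Fin 4, QAdj (sh p.1 (vA p.2)) (sh p.1 (vB p.2)) := by
  unfold QAdj; decide

lemma hdis : ∀ p q : Fin 6 × Fin 4, p ≠ q →
    sh p.1 (vA p.2) ≠ sh q.1 (vA q.2) ∧ sh p.1 (vA p.2) ≠ sh q.1 (vB q.2) ∧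
    sh p.1 (vB p.2) ≠ sh q.1 (vA q.2) ∧ sh p.1 (vB p.2) ≠ sh q.1 (vB q.2) := by decide

set_option maxHeartbeats 4000000 in
set_option maxRecDepth 10000 in
lemma hblk : ∀ F : Finset (Fin 6), ∀ b : Fin 6 → Bool, F.card = 3 →
    ∃ p : Fin 6 × Fin 4, (∀ i ∈ F, sh p.1 (vA p.2) i = b i) ∧
      (∀ i ∈ F, sh p.1 (vB p.2) i = b i) := by decide

lemma himg (j : Fin 6) (a b : Fin 6 → Bool) :
    (fun x : Fin 6 → Bool => fun i => x (i + j)) '' {a, b} = {sh j a, sh j b} := by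
  simp only [Set.image_insert_eq, Set.image_singleton]; rfl

lemma hM : M6 = Set.range g := by
  ext e
  simp only [M6, cyc, Set.mem_union, Set.mem_setOf_eq, himg, Set.mem_range]
  constructor
  · rintro (((⟨j, rfl⟩ | ⟨j, rfl⟩) | ⟨j, rfl⟩) | ⟨j, rfl⟩)
    exacts [⟨(j, 0), rfl⟩, ⟨(j, 1), rfl⟩, ⟨(j, 2), rfl⟩, ⟨(j, 3), rfl⟩]
  · rintro ⟨⟨j, k⟩, rfl⟩
    fin_cases k
    · exact Or.inl (Or.inl (Or.inl ⟨j, rfl⟩))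
    · exact Or.inl (Or.inl (Or.inr ⟨j, rfl⟩))
    · exact Or.inl (Or.inr ⟨j, rfl⟩)
    · exact Or.inr ⟨j, rfl⟩

lemma hpne {p q : Fin 6 × Fin 4} (h : p ≠ q) : g p ∩ g q = ∅ := by
  obtain ⟨h1, h2, h3, h4⟩ := hdis p q h
  ext z
  simp only [Set.mem_inter_iff, g, Set.mem_insert_iff, Set.mem_singleton_iff,
    Set.mem_empty_iff_false, iff_false, not_and]
  rintro (rfl | rfl) (h5 | h5) <;> simp_all

lemma ginj : Function.Injective g := by
  intro p q h
  by_contra hne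
  have h1 : sh p.1 (vA p.2) ∈ g p ∩ g q := by
    constructor
    · exact Set.mem_insert _ _
    · rw [← h]; exact Set.mem_insert _ _
  rw [hpne hne] at h1
  exact h1

theorem stmt_19 :
    IsMatching 6 M6 ∧ M6.ncard = 24 ∧ Blocks 6 3 M6 := by
  refine ⟨⟨?_, ?_⟩, ?_, ?_⟩
  · intro e he
    rw [hM] at he
    obtain ⟨p, rfl⟩ := he
    exact ⟨_, _, hadj p, rfl⟩
  · intro e he f hf hne
    rw [hM] at he hf
    obtain ⟨p, rfl⟩ := he
    obtain ⟨q, rfl⟩ := hf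
    exact hpne (fun h => hne (by rw [h]))
  · rw [hM, ← Set.image_univ, Set.ncard_image_of_injOn (ginj.injOn), Set.ncard_univ]
    simp [Nat.card_eq_fintype_card]
  · rintro S ⟨F, b, hF, rfl⟩
    obtain ⟨p, h1, h2⟩ := hblk F b hF
    refine ⟨g p, by rw [hM]; exact ⟨p, rfl⟩, ?_⟩
    rintro z (rfl | rfl)
    · exact h1
    · exact h2
end
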